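/- arXiv:1909.06725 — 3 statements merged into one kernel-verified Lean document; each statement's English description precedes it below -/
import Mathlib

section
/- The ring O_E of Laurent series over O_L whose coefficients tend to 0 at -∞ is a discrete valuation ring whose maximal ideal is generated by a uniformizer π_L of L. -/
set_option linter.unusedSectionVars false
set_option maxHeartbeats 1000000

open Filter

/-- The carrier of the ring `O_E`: Laurent series with coefficients in the ring of
integers of `L` tending to `0` at `-∞`. -/
def OECarrier (L : Type*) [NormedField L] : Type _ :=
  {a : ℤ → L // (∀ n, ‖a n‖ ≤ 1) ∧ Tendsto (fun n => ‖a n‖) atBot (nhds 0)}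

namespace OEaux
variable {L : Type*} [NontriviallyNormedField L] [CompleteSpace L] [IsUltrametricDist L]
    [R : CommRing (OECarrier L)] {πL : L}
    (hadd : ∀ a b : OECarrier L, ∀ n : ℤ, (a + b).1 n = a.1 n + b.1 n)
    (hmul : ∀ a b : OECarrier L, ∀ n : ℤ, (a * b).1 n = ∑' i : ℤ, a.1 i * b.1 (n - i))
    (hπ0 : πL ≠ 0) (hπ1 : ‖πL‖ < 1)
    (hπunif : ∀ x : L, x ≠ 0 → ∃ (n : ℤ) (u : L), ‖u‖ = 1 ∧ x = u * πL ^ n)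

lemma ext' {a b : OECarrier L} (h : ∀ n, a.1 n = b.1 n) : a = b := Subtype.ext (funext h)

/-- delta element -/
def delta (c : L) (hc : ‖c‖ ≤ 1) (k : ℤ) : OECarrier L :=
  ⟨fun n => if n = k then c else 0, fun n => by dsimp only; split <;> simp [hc],
   by
    have h : ∀ᶠ n in (atBot : Filter ℤ), ‖(fun n => if n = k then c else 0) n‖ = 0 := by
      filter_upwards [eventually_le_atBot (k-1)] with n hn
      have : n ≠ k := by omega
      simp [this]
    exact Tendsto.congr' (h.mono fun n hn => hn.symm) tendsto_const_nhds⟩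

@[simp] lemma delta_coeff (c : L) (hc : ‖c‖ ≤ 1) (k n : ℤ) :
    (delta c hc k).1 n = if n = k then c else 0 := rfl

include hadd in
lemma zero_coeff (n : ℤ) : (0 : OECarrier L).1 n = 0 := by
  have h := hadd 0 0 n
  rw [add_zero] at h
  exact left_eq_add.mp h

include hadd in
lemma neg_coeff (a : OECarrier L) (n : ℤ) : (-a).1 n = -(a.1 n) := by
  have h := hadd a (-a) n
  rw [add_neg_cancel, zero_coeff hadd] at h
  exact (eq_neg_of_add_eq_zero_right h.symm)

include hadd in
lemma sub_coeff (a b : OECarrier L) (n : ℤ) : (a - b).1 n = a.1 n - b.1 n := by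
  rw [sub_eq_add_neg, hadd, neg_coeff hadd, sub_eq_add_neg]

include hmul in
lemma delta_mul_coeff (c : L) (hc : ‖c‖ ≤ 1) (k : ℤ) (a : OECarrier L) (n : ℤ) :
    (delta c hc k * a).1 n = c * a.1 (n - k) := by
  rw [hmul]
  rw [tsum_eq_single k (fun i hik => by simp [hik])]
  simp

include hmul in
lemma one_coeff (n : ℤ) : (1 : OECarrier L).1 n = if n = 0 then 1 else 0 := by
  have h1 : ‖(1:L)‖ ≤ 1 := le_of_eq norm_one
  have h := hmul 1 (delta 1 h1 0) n
  rw [one_mul] at h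
  rw [delta_coeff] at h
  rw [tsum_eq_single n (fun i hin => by
    have : ¬ (n - i = 0) := fun hc => hin (by omega)
    simp [this])] at h
  rw [sub_self] at h
  simp only [delta_coeff, if_true, mul_one] at h
  simpa using h.symm


include hπ0 hπ1 hπunif in
lemma norm_discrete {x : L} (hx : x ≠ 0) (hle : ‖x‖ ≤ 1) : ∃ k : ℕ, ‖x‖ = ‖πL‖ ^ k := by
  have hr0 : 0 < ‖πL‖ := norm_pos_iff.mpr hπ0
  obtain ⟨m, u, hu, rfl⟩ := hπunif x hx
  have hnx : ‖u * πL ^ m‖ = ‖πL‖ ^ m := by rw [norm_mul, hu, one_mul, norm_zpow]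
  have hm : 0 ≤ m := by
    by_contra hm
    push_neg at hm
    have h1 : (1:ℝ) < ‖πL‖ ^ m := one_lt_zpow_of_neg₀ hr0 hπ1 hm
    rw [hnx] at hle
    linarith
  exact ⟨m.toNat, by rw [hnx, ← zpow_natCast, Int.toNat_of_nonneg hm]⟩

include hπ0 hπ1 hπunif in
lemma norm_lt_pow_succ {x : L} {k : ℕ} (hle1 : ‖x‖ ≤ 1) (h : ‖x‖ < ‖πL‖ ^ k) :
    ‖x‖ ≤ ‖πL‖ ^ (k + 1) := by
  have hr0 : 0 < ‖πL‖ := norm_pos_iff.mpr hπ0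
  rcases eq_or_ne x 0 with rfl | hx
  · rw [norm_zero]; positivity
  obtain ⟨j, hj⟩ := norm_discrete hπ0 hπ1 hπunif hx hle1
  rw [hj] at h ⊢
  have : k < j := (pow_lt_pow_iff_right_of_lt_one₀ hr0 hπ1).mp h
  exact pow_le_pow_of_le_one hr0.le hπ1.le (by omega)

include hπ0 hπ1 hπunif in
lemma exists_lead (a : OECarrier L) (ha : ∃ n, a.1 n ≠ 0) :
    ∃ (k : ℕ) (N : ℤ), ‖a.1 N‖ = ‖πL‖ ^ k ∧ (∀ n, ‖a.1 n‖ ≤ ‖πL‖ ^ k) ∧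
      ∀ n < N, ‖a.1 n‖ < ‖πL‖ ^ k := by
  classical
  have hr0 : 0 < ‖πL‖ := norm_pos_iff.mpr hπ0
  set K := {k : ℕ | ∃ n, ‖a.1 n‖ = ‖πL‖ ^ k} with hK
  have hKne : K.Nonempty := by
    obtain ⟨n₀, h0⟩ := ha
    obtain ⟨k, hk⟩ := norm_discrete hπ0 hπ1 hπunif h0 (a.2.1 n₀)
    exact ⟨k, n₀, hk⟩
  obtain ⟨N₀, hN₀⟩ : sInf K ∈ K := Nat.sInf_mem hKne
  have hbound : ∀ n, ‖a.1 n‖ ≤ ‖πL‖ ^ sInf K := by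
    intro n
    rcases eq_or_ne (a.1 n) 0 with h | h
    · rw [h, norm_zero]; positivity
    · obtain ⟨k, hk⟩ := norm_discrete hπ0 hπ1 hπunif h (a.2.1 n)
      have hkk : sInf K ≤ k := Nat.sInf_le ⟨n, hk⟩
      rw [hk]
      exact pow_le_pow_of_le_one hr0.le hπ1.le hkk
  have hev : ∀ᶠ n in (atBot : Filter ℤ), ‖a.1 n‖ < ‖πL‖ ^ sInf K :=
    a.2.2.eventually (gt_mem_nhds (pow_pos hr0 _))
  obtain ⟨B, hB⟩ := eventually_atBot.mp hev
  have hbddS : ∃ b, ∀ z, (‖a.1 z‖ = ‖πL‖ ^ sInf K) → b ≤ z := by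
    refine ⟨B + 1, fun z hz => ?_⟩
    by_contra hzz
    push_neg at hzz
    have := hB z (by omega)
    rw [hz] at this
    exact lt_irrefl _ this
  obtain ⟨N, hN, hNle⟩ := Int.exists_least_of_bdd hbddS ⟨N₀, hN₀⟩
  refine ⟨sInf K, N, hN, hbound, fun n hn => lt_of_le_of_ne (hbound n) fun he => ?_⟩
  exact absurd (hNle n he) (by omega)

lemma conv_tendsto (a b : OECarrier L) (n : ℤ) :
    Tendsto (fun i => a.1 i * b.1 (n - i)) cofinite (nhds 0) := by
  rw [Int.cofinite_eq, tendsto_sup]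
  constructor
  · rw [tendsto_zero_iff_norm_tendsto_zero]
    refine squeeze_zero (fun i => norm_nonneg _) (fun i => ?_) a.2.2
    rw [norm_mul]
    exact mul_le_of_le_one_right (norm_nonneg _) (b.2.1 _)
  · rw [tendsto_zero_iff_norm_tendsto_zero]
    have hcomp : Tendsto (fun i : ℤ => n - i) atTop atBot := by
      simpa [sub_eq_add_neg] using tendsto_atBot_add_const_left atTop n tendsto_neg_atTop_atBot
    refine squeeze_zero (fun i => norm_nonneg _) (fun i => ?_) (b.2.2.comp hcomp)
    rw [norm_mul]
    exact mul_le_of_le_one_left (norm_nonneg _) (a.2.1 _)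

lemma conv_summable (a b : OECarrier L) (n : ℤ) :
    Summable (fun i => a.1 i * b.1 (n - i)) :=
  NonarchimedeanAddGroup.summable_of_tendsto_cofinite_zero (conv_tendsto a b n)

include hmul in
lemma mul_coeff_le (a b : OECarrier L) {c d : ℝ} (hc : 0 ≤ c) (hd : 0 ≤ d)
    (ha : ∀ n, ‖a.1 n‖ ≤ c) (hb : ∀ n, ‖b.1 n‖ ≤ d) (n : ℤ) : ‖(a * b).1 n‖ ≤ c * d := by
  rw [hmul]
  apply IsUltrametricDist.norm_tsum_le_of_forall_le_of_nonneg (mul_nonneg hc hd)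
  intro i
  rw [norm_mul]
  exact mul_le_mul (ha i) (hb _) (norm_nonneg _) hc


include hmul hπ0 hπ1 hπunif in
lemma lead_mul (a b : OECarrier L) {ka kb : ℕ} {Na Nb : ℤ}
    (haN : ‖a.1 Na‖ = ‖πL‖ ^ ka) (hab : ∀ n, ‖a.1 n‖ ≤ ‖πL‖ ^ ka)
    (halt : ∀ n < Na, ‖a.1 n‖ < ‖πL‖ ^ ka)
    (hbN : ‖b.1 Nb‖ = ‖πL‖ ^ kb) (hbb : ∀ n, ‖b.1 n‖ ≤ ‖πL‖ ^ kb)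
    (hblt : ∀ n < Nb, ‖b.1 n‖ < ‖πL‖ ^ kb) :
    ‖(a * b).1 (Na + Nb)‖ = ‖πL‖ ^ (ka + kb) := by
  classical
  have hr0 : 0 < ‖πL‖ := norm_pos_iff.mpr hπ0
  rw [hmul]
  set f : ℤ → L := fun i => a.1 i * b.1 (Na + Nb - i) with hf
  have hfN : ‖f Na‖ = ‖πL‖ ^ (ka + kb) := by
    simp only [hf]
    rw [norm_mul, haN, show Na + Nb - Na = Nb by ring, hbN, pow_add]
  have hrest : ∀ i, ‖if i = Na then 0 else f i‖ ≤ ‖πL‖ ^ (ka + kb + 1) := by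
    intro i
    split
    · rw [norm_zero]; positivity
    · rename_i hiN
      rcases lt_or_gt_of_ne hiN with h | h
      · have h1 : ‖a.1 i‖ ≤ ‖πL‖ ^ (ka + 1) :=
          norm_lt_pow_succ hπ0 hπ1 hπunif (a.2.1 i) (halt i h)
        calc ‖f i‖ = ‖a.1 i‖ * ‖b.1 (Na + Nb - i)‖ := norm_mul _ _
          _ ≤ ‖πL‖ ^ (ka + 1) * ‖πL‖ ^ kb :=
              mul_le_mul h1 (hbb _) (norm_nonneg _) (by positivity)
          _ = ‖πL‖ ^ (ka + kb + 1) := by rw [← pow_add]; ring_nf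
      · have hlt2 : Na + Nb - i < Nb := by omega
        have h1 : ‖b.1 (Na + Nb - i)‖ ≤ ‖πL‖ ^ (kb + 1) :=
          norm_lt_pow_succ hπ0 hπ1 hπunif (b.2.1 _) (hblt _ hlt2)
        calc ‖f i‖ = ‖a.1 i‖ * ‖b.1 (Na + Nb - i)‖ := norm_mul _ _
          _ ≤ ‖πL‖ ^ ka * ‖πL‖ ^ (kb + 1) :=
              mul_le_mul (hab i) h1 (norm_nonneg _) (by positivity)
          _ = ‖πL‖ ^ (ka + kb + 1) := by rw [← pow_add]; ring_nf
  have hsum : Summable f := conv_summable a b (Na + Nb)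
  rw [Summable.tsum_eq_add_tsum_ite hsum Na]
  have hrn : ‖∑' i, if i = Na then 0 else f i‖ ≤ ‖πL‖ ^ (ka + kb + 1) :=
    IsUltrametricDist.norm_tsum_le_of_forall_le_of_nonneg (by positivity) hrest
  have hlt : ‖∑' i, if i = Na then 0 else f i‖ < ‖f Na‖ := by
    rw [hfN]
    exact hrn.trans_lt (pow_lt_pow_right_of_lt_one₀ hr0 hπ1 (by omega))
  rw [IsUltrametricDist.norm_add_eq_max_of_norm_ne_norm hlt.ne', max_eq_left hlt.le, hfN]

include hadd in
lemma exists_ne_zero (a : OECarrier L) (ha : a ≠ 0) : ∃ n, a.1 n ≠ 0 := by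
  by_contra h
  push_neg at h
  exact ha (ext' fun n => by rw [h n, zero_coeff hadd])

include hmul in
lemma pi_pow_mul_coeff (hle : ‖πL‖ ≤ 1) (k : ℕ) (x : OECarrier L) (n : ℤ) :
    ((delta πL hle 0) ^ k * x).1 n = πL ^ k * x.1 n := by
  induction k generalizing x n with
  | zero => rw [pow_zero, pow_zero, one_mul, one_mul]
  | succ k ih =>
      rw [pow_succ, mul_assoc, ih, delta_mul_coeff hmul, sub_zero, pow_succ]
      ring_nf

include hadd hmul hπ0 hπ1 hπunif in
lemma factor (a : OECarrier L) (ha : a ≠ 0) :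
    ∃ (k : ℕ) (b : OECarrier L) (N : ℤ), ‖b.1 N‖ = 1 ∧ (∀ n < N, ‖b.1 n‖ < 1) ∧
      a = (delta πL hπ1.le 0) ^ k * b := by
  have hr0 : 0 < ‖πL‖ := norm_pos_iff.mpr hπ0
  obtain ⟨k, N, hN, hb, hlt⟩ := exists_lead hπ0 hπ1 hπunif a (exists_ne_zero hadd a ha)
  have hrk : (0:ℝ) < ‖πL‖ ^ k := by positivity
  have hnorm : ∀ n, ‖(πL ^ k)⁻¹ * a.1 n‖ = (‖πL‖ ^ k)⁻¹ * ‖a.1 n‖ := by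
    intro n; rw [norm_mul, norm_inv, norm_pow]
  refine ⟨k, ⟨fun n => (πL ^ k)⁻¹ * a.1 n, fun n => ?_, ?_⟩, N, ?_, ?_, ?_⟩
  · rw [hnorm, inv_mul_le_one₀ hrk]
    exact hb n
  · have h2 := a.2.2.const_mul (‖πL‖ ^ k)⁻¹
    rw [mul_zero] at h2
    refine Tendsto.congr (fun n => ?_) h2
    rw [hnorm]
  · rw [hnorm, hN, inv_mul_cancel₀ hrk.ne']
  · intro n hn
    have h3 := mul_lt_mul_of_pos_left (hlt n hn) (inv_pos.mpr hrk)
    rw [inv_mul_cancel₀ hrk.ne'] at h3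
    rw [hnorm]
    exact h3
  · refine ext' fun n => ?_
    refine Eq.trans ?_ (pi_pow_mul_coeff hmul hπ1.le k _ n).symm
    exact (mul_inv_cancel_left₀ (pow_ne_zero _ hπ0) _).symm

include hadd hmul hπ0 hπ1 hπunif in
lemma lead_unique {x : OECarrier L} {k k' : ℕ} {N N' : ℤ}
    (hN : ‖x.1 N‖ = ‖πL‖ ^ k) (hb : ∀ n, ‖x.1 n‖ ≤ ‖πL‖ ^ k)
    (hN' : ‖x.1 N'‖ = ‖πL‖ ^ k') (hb' : ∀ n, ‖x.1 n‖ ≤ ‖πL‖ ^ k') : k = k' := by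
  have hr0 : 0 < ‖πL‖ := norm_pos_iff.mpr hπ0
  have h1 : ‖πL‖ ^ k ≤ ‖πL‖ ^ k' := hN ▸ hb' N
  have h2 : ‖πL‖ ^ k' ≤ ‖πL‖ ^ k := hN' ▸ hb N'
  exact (pow_right_strictAnti₀ hr0 hπ1).injective (le_antisymm h1 h2)


include hadd hmul in
lemma geom_unit (t : OECarrier L)
    (hsum : ∀ n : ℤ, Summable (fun m : ℕ => (t ^ m).1 n))
    (hg1 : ∀ n : ℤ, ‖∑' m : ℕ, (t ^ m).1 n‖ ≤ 1)
    (hgt : Tendsto (fun n : ℤ => ‖∑' m : ℕ, (t ^ m).1 n‖) atBot (nhds 0))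
    (hdbl : ∀ n : ℤ, Summable (Function.uncurry
        (fun (m : ℕ) (i : ℤ) => t.1 i * (t ^ m).1 (n - i)))) :
    IsUnit (1 - t) := by
  set w : OECarrier L := ⟨fun n => ∑' m : ℕ, (t ^ m).1 n, hg1, hgt⟩ with hw
  refine IsUnit.of_mul_eq_one w (ext' fun n => ?_)
  have hrw : ((1 - t) * w) = w - t * w := by ring
  rw [hrw, sub_coeff hadd, hmul]
  have h1 : ∀ i : ℤ, t.1 i * w.1 (n - i) = ∑' m : ℕ, t.1 i * (t ^ m).1 (n - i) := by
    intro i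
    exact tsum_mul_left.symm
  have h2 : ∀ m : ℕ, (∑' i : ℤ, t.1 i * (t ^ m).1 (n - i)) = (t ^ (m + 1)).1 n := by
    intro m
    rw [pow_succ', hmul]
  have hswap : (∑' i : ℤ, ∑' m : ℕ, t.1 i * (t ^ m).1 (n - i))
      = ∑' m : ℕ, ∑' i : ℤ, t.1 i * (t ^ m).1 (n - i) :=
    Summable.tsum_comm (hdbl n)
  have hzero : ∑' m : ℕ, (t ^ m).1 n = (t ^ 0).1 n + ∑' m : ℕ, (t ^ (m + 1)).1 n :=
    Summable.tsum_eq_zero_add (hsum n)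
  calc w.1 n - ∑' i : ℤ, t.1 i * w.1 (n - i)
      = w.1 n - ∑' i : ℤ, ∑' m : ℕ, t.1 i * (t ^ m).1 (n - i) := by rw [tsum_congr h1]
    _ = w.1 n - ∑' m : ℕ, ∑' i : ℤ, t.1 i * (t ^ m).1 (n - i) := by rw [hswap]
    _ = w.1 n - ∑' m : ℕ, (t ^ (m + 1)).1 n := by rw [tsum_congr h2]
    _ = (t ^ 0).1 n := by
        have : (w.1 n : L) = ∑' m : ℕ, (t ^ m).1 n := rfl
        rw [this, hzero]; ring
    _ = (1 : OECarrier L).1 n := by rw [pow_zero]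

include hadd hmul in
lemma isUnit_one_sub_of_supp_pos (t : OECarrier L) (ht0 : ∀ i ≤ 0, t.1 i = 0) :
    IsUnit (1 - t) := by
  classical
  have hpow_supp : ∀ (m : ℕ) (n : ℤ), n < m → (t ^ m).1 n = 0 := by
    intro m
    induction m with
    | zero =>
        intro n hn
        rw [pow_zero, one_coeff hmul, if_neg (by omega)]
    | succ m ih =>
        intro n hn
        rw [pow_succ', hmul]
        have hterm : ∀ i : ℤ, t.1 i * (t ^ m).1 (n - i) = 0 := by
          intro i
          rcases le_or_gt i 0 with h | h
          · rw [ht0 i h, zero_mul]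
          · rw [ih (n - i) (by omega), mul_zero]
        rw [tsum_congr hterm, tsum_zero]
  have hself : ∀ n : ℤ, n ≤ 0 → ∀ m : ℕ, m ≠ 0 → (t ^ m).1 n = 0 := by
    intro n hn m hm
    exact hpow_supp m n (by omega)
  have hsum : ∀ n : ℤ, Summable (fun m : ℕ => (t ^ m).1 n) := by
    intro n
    apply summable_of_ne_finset_zero (s := Finset.range (n.toNat + 1))
    intro m hm
    rw [Finset.mem_range, not_lt] at hm
    exact hpow_supp m n (by omega)
  apply geom_unit hadd hmul t hsum
  · intro n
    exact IsUltrametricDist.norm_tsum_le_of_forall_le_of_nonneg zero_le_one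
      (fun m => (t ^ m).2.1 n)
  · have hev : ∀ᶠ n in (atBot : Filter ℤ), ‖∑' m : ℕ, (t ^ m).1 n‖ = 0 := by
      filter_upwards [eventually_le_atBot (-1 : ℤ)] with n hn
      have : ∀ m : ℕ, (t ^ m).1 n = 0 := fun m => hpow_supp m n (by omega)
      rw [tsum_congr this, tsum_zero, norm_zero]
    exact Tendsto.congr' (hev.mono fun n h => h.symm) tendsto_const_nhds
  · intro n
    apply summable_of_ne_finset_zero (s := Finset.range (n.toNat + 1) ×ˢ Finset.Icc 1 n)
    intro p hp
    rw [Finset.mem_product, not_and_or] at hp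
    rcases p with ⟨m, i⟩
    simp only [Function.uncurry]
    rcases le_or_gt i 0 with hi | hi
    · rw [ht0 i hi, zero_mul]
    rcases hp with hm | hif
    · rw [Finset.mem_range, not_lt] at hm
      have : n - i < m := by
        have := Int.self_le_toNat n
        omega
      rw [hpow_supp m _ this, mul_zero]
    · rw [Finset.mem_Icc, not_and_or, not_le, not_le] at hif
      rcases hif with h | h
      · omega
      · rw [hpow_supp m (n - i) (by omega), mul_zero]

include hadd hmul hπ0 hπ1 in
lemma isUnit_one_sub_small (y : OECarrier L) (hy : ∀ n, ‖y.1 n‖ ≤ ‖πL‖) :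
    IsUnit (1 - y) := by
  classical
  have hr0 : 0 < ‖πL‖ := norm_pos_iff.mpr hπ0
  have hpow : ∀ (m : ℕ) (n : ℤ), ‖(y ^ m).1 n‖ ≤ ‖πL‖ ^ m := by
    intro m
    induction m with
    | zero =>
        intro n
        rw [pow_zero, pow_zero]
        exact (1 : OECarrier L).2.1 n
    | succ m ih =>
        intro n
        rw [pow_succ']
        have := mul_coeff_le hmul y (y ^ m) hr0.le (by positivity) hy ih n
        calc ‖(y * y ^ m).1 n‖ ≤ ‖πL‖ * ‖πL‖ ^ m := this
          _ = ‖πL‖ ^ (m + 1) := by rw [pow_succ]; ring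
  have hsum : ∀ n : ℤ, Summable (fun m : ℕ => (y ^ m).1 n) := by
    intro n
    apply NonarchimedeanAddGroup.summable_of_tendsto_cofinite_zero
    rw [Nat.cofinite_eq_atTop, tendsto_zero_iff_norm_tendsto_zero]
    exact squeeze_zero (fun m => norm_nonneg _) (fun m => hpow m n)
      (tendsto_pow_atTop_nhds_zero_of_lt_one hr0.le hπ1)
  apply geom_unit hadd hmul y hsum
  · intro n
    exact IsUltrametricDist.norm_tsum_le_of_forall_le_of_nonneg zero_le_one
      (fun m => (y ^ m).2.1 n)
  · rw [Metric.tendsto_nhds]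
    intro ε hε
    obtain ⟨M, hM⟩ := exists_pow_lt_of_lt_one (half_pos hε) hπ1
    have hev : ∀ᶠ n in (atBot : Filter ℤ), ∀ m ∈ Finset.range M, ‖(y ^ m).1 n‖ ≤ ‖πL‖ ^ M := by
      rw [eventually_all_finset]
      intro m _
      exact ((y ^ m).2.2.eventually (ge_mem_nhds (pow_pos hr0 M))).mono fun n h => h
    obtain ⟨B, hB⟩ := eventually_atBot.mp hev
    rw [eventually_atBot]
    refine ⟨B, fun n hn => ?_⟩
    have hbound : ∀ m : ℕ, ‖(y ^ m).1 n‖ ≤ ‖πL‖ ^ M := by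
      intro m
      rcases lt_or_ge m M with h | h
      · exact hB n hn m (Finset.mem_range.mpr h)
      · exact (hpow m n).trans (pow_le_pow_of_le_one hr0.le hπ1.le h)
    have : ‖∑' m : ℕ, (y ^ m).1 n‖ ≤ ‖πL‖ ^ M :=
      IsUltrametricDist.norm_tsum_le_of_forall_le_of_nonneg (by positivity) hbound
    rw [Real.dist_0_eq_abs, abs_of_nonneg (norm_nonneg _)]
    calc ‖∑' m : ℕ, (y ^ m).1 n‖ ≤ ‖πL‖ ^ M := this
      _ < ε / 2 := hM
      _ < ε := half_lt_self hε
  · intro n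
    apply NonarchimedeanAddGroup.summable_of_tendsto_cofinite_zero
    intro s hs
    rw [mem_map, mem_cofinite]
    obtain ⟨ε, hε, hball⟩ := Metric.mem_nhds_iff.mp hs
    obtain ⟨M, hM⟩ := exists_pow_lt_of_lt_one hε hπ1
    set F : ℕ × ℤ → L := Function.uncurry (fun (m : ℕ) (i : ℤ) => y.1 i * (y ^ m).1 (n - i))
      with hF
    have hsmall : ∀ p : ℕ × ℤ, M ≤ p.1 → F p ∈ s := by
      intro p hp
      apply hball
      rw [Metric.mem_ball, dist_zero_right]
      have : ‖F p‖ ≤ ‖πL‖ ^ p.1 := by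
        rw [hF]
        simp only [Function.uncurry]
        calc ‖y.1 p.2 * (y ^ p.1).1 (n - p.2)‖
            = ‖y.1 p.2‖ * ‖(y ^ p.1).1 (n - p.2)‖ := norm_mul _ _
          _ ≤ 1 * ‖πL‖ ^ p.1 :=
              mul_le_mul (y.2.1 p.2) (hpow p.1 (n - p.2)) (norm_nonneg _) zero_le_one
          _ = ‖πL‖ ^ p.1 := one_mul _
      calc ‖F p‖ ≤ ‖πL‖ ^ p.1 := this
        _ ≤ ‖πL‖ ^ M := pow_le_pow_of_le_one hr0.le hπ1.le hp
        _ < ε := hM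
    have hfin : ∀ m : ℕ, {i : ℤ | F (m, i) ∉ s}.Finite := by
      intro m
      have htd := conv_tendsto y (y ^ m) n
      have := htd hs
      rw [mem_map, mem_cofinite] at this
      exact this.subset fun i hi => hi
    have hsub : {p : ℕ × ℤ | F p ∉ s} ⊆
        ⋃ m ∈ Finset.range M, (fun i => ((m : ℕ), i)) '' {i : ℤ | F (m, i) ∉ s} := by
      rintro ⟨m, i⟩ hp
      have hmM : m < M := by
        by_contra hc
        push_neg at hc
        exact hp (hsmall (m, i) hc)
      exact Set.mem_biUnion (Finset.mem_range.mpr hmM) ⟨i, hp, rfl⟩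
    exact (Set.Finite.biUnion (Finset.range M).finite_toSet
      (fun m _ => (hfin m).image _)).subset hsub


include hmul in
lemma isUnit_delta (c : L) (hc : ‖c‖ = 1) (k : ℤ) : IsUnit (delta c hc.le k) := by
  have hc0 : c ≠ 0 := by
    intro h
    rw [h, norm_zero] at hc
    norm_num at hc
  have hc' : ‖c⁻¹‖ ≤ 1 := by rw [norm_inv, hc]; norm_num
  refine IsUnit.of_mul_eq_one (delta c⁻¹ hc' (-k)) (ext' fun n => ?_)
  rw [delta_mul_coeff hmul, delta_coeff, one_coeff hmul]
  by_cases hn : n = 0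
  · have : n - k = -k := by omega
    rw [if_pos hn, if_pos this, mul_inv_cancel₀ hc0]
  · have : ¬(n - k = -k) := by omega
    rw [if_neg hn, if_neg this, mul_zero]

include hadd hmul hπ0 hπ1 hπunif in
lemma isUnit_of_lead_one (b : OECarrier L) (N : ℤ) (hN : ‖b.1 N‖ = 1)
    (hlt : ∀ n < N, ‖b.1 n‖ < 1) : IsUnit b := by
  classical
  have hr0 : 0 < ‖πL‖ := norm_pos_iff.mpr hπ0
  set c : L := b.1 N with hc
  have hc0 : c ≠ 0 := by
    intro h
    rw [h, norm_zero] at hN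
    norm_num at hN
  have hcinv : ‖c⁻¹‖ ≤ 1 := by rw [norm_inv, hN]; norm_num
  set d : OECarrier L := delta c⁻¹ hcinv (-N) with hd
  set b' : OECarrier L := d * b with hb'
  have hb'co : ∀ n, b'.1 n = c⁻¹ * b.1 (n + N) := by
    intro n
    rw [hb', delta_mul_coeff hmul, sub_neg_eq_add]
  have hb'0 : b'.1 0 = 1 := by
    rw [hb'co, zero_add, ← hc, inv_mul_cancel₀ hc0]
  have hb'norm : ∀ n, ‖b'.1 n‖ = ‖b.1 (n + N)‖ := by
    intro n
    rw [hb'co, norm_mul, norm_inv, hN, inv_one, one_mul]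
  have hb'lt : ∀ n < 0, ‖b'.1 n‖ ≤ ‖πL‖ := by
    intro n hn
    have h1 : ‖b.1 (n + N)‖ < 1 := hlt _ (by omega)
    have h2 : ‖b.1 (n + N)‖ < ‖πL‖ ^ 0 := by rwa [pow_zero]
    have := norm_lt_pow_succ hπ0 hπ1 hπunif (b.2.1 _) h2
    rw [pow_one] at this
    rw [hb'norm]
    exact this
  -- the "nonnegative part" u of b'
  set u : OECarrier L := ⟨fun n => if 0 ≤ n then b'.1 n else 0, by
      intro n
      dsimp only
      split
      · exact b'.2.1 n
      · rw [norm_zero]; exact zero_le_one, by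
      have hev : ∀ᶠ n in (atBot : Filter ℤ),
          ‖(fun n => if 0 ≤ n then b'.1 n else 0) n‖ = 0 := by
        filter_upwards [eventually_le_atBot (-1 : ℤ)] with n hn
        rw [if_neg (by omega), norm_zero]
      exact Tendsto.congr' (hev.mono fun n h => h.symm) tendsto_const_nhds⟩ with hu
  have hucoeff : ∀ n, u.1 n = if 0 ≤ n then b'.1 n else 0 := fun n => rfl
  set t : OECarrier L := 1 - u with ht
  have ht0 : ∀ i ≤ 0, t.1 i = 0 := by
    intro i hi
    rw [ht, sub_coeff hadd, one_coeff hmul, hucoeff]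
    rcases eq_or_lt_of_le hi with h | h
    · subst h
      rw [if_pos rfl, if_pos le_rfl, hb'0]
      ring
    · rw [if_neg (by omega), if_neg (by omega)]
      ring
  have huunit : IsUnit u := by
    have := isUnit_one_sub_of_supp_pos hadd hmul t ht0
    rwa [ht, sub_sub_cancel] at this
  obtain ⟨v, hv⟩ := huunit.exists_right_inv
  set z : OECarrier L := b' - u with hz
  have hzle : ∀ n, ‖z.1 n‖ ≤ ‖πL‖ := by
    intro n
    rw [hz, sub_coeff hadd, hucoeff]
    rcases le_or_gt 0 n with h | h
    · rw [if_pos h, sub_self, norm_zero]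
      exact hr0.le
    · rw [if_neg (by omega), sub_zero]
      exact hb'lt n h
  set y : OECarrier L := -(v * z) with hy
  have hyle : ∀ n, ‖y.1 n‖ ≤ ‖πL‖ := by
    intro n
    rw [hy, neg_coeff hadd, norm_neg]
    have := mul_coeff_le hmul v z zero_le_one hr0.le v.2.1 hzle n
    rwa [one_mul] at this
  have h1y : IsUnit (1 - y) := isUnit_one_sub_small hadd hmul hπ0 hπ1 y hyle
  have hb'eq : b' = u * (1 - y) := by
    have : u * (1 - y) = u + (u * v) * z := by rw [hy]; ring
    rw [this, hv, one_mul, hz]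
    ring
  have hb'unit : IsUnit b' := hb'eq ▸ huunit.mul h1y
  rw [hb'] at hb'unit
  exact isUnit_of_mul_isUnit_right hb'unit

end OEaux

/-- `O_E` (with coefficientwise addition and convolution multiplication)
is a discrete valuation ring whose maximal ideal is generated by a uniformizer `π_L`
of `L`. -/
theorem OE_discreteValuationRing
    {L : Type*} [NontriviallyNormedField L] [CompleteSpace L] [IsUltrametricDist L]
    (πL : L) (hπ0 : πL ≠ 0) (hπ1 : ‖πL‖ < 1)
    (hπunif : ∀ x : L, x ≠ 0 → ∃ (n : ℤ) (u : L), ‖u‖ = 1 ∧ x = u * πL ^ n)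
    [R : CommRing (OECarrier L)]
    (hadd : ∀ a b : OECarrier L, ∀ n : ℤ, (a + b).1 n = a.1 n + b.1 n)
    (hmul : ∀ a b : OECarrier L, ∀ n : ℤ, (a * b).1 n = ∑' i : ℤ, a.1 i * b.1 (n - i)) :
    ∃ (hD : IsDomain (OECarrier L)),
      @IsDiscreteValuationRing (OECarrier L) R hD ∧
      ∃ πser : OECarrier L, (πser.1 = fun n => if n = 0 then πL else 0) ∧
        ∀ (hL : IsLocalRing (OECarrier L)),
          IsLocalRing.maximalIdeal (OECarrier L) = Ideal.span {πser} := by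
  classical
  have hr0 : 0 < ‖πL‖ := norm_pos_iff.mpr hπ0
  set πser : OECarrier L := OEaux.delta πL hπ1.le 0 with hπs
  haveI hnt : Nontrivial (OECarrier L) := by
    refine ⟨⟨1, 0, fun h => ?_⟩⟩
    have h1 : (1 : OECarrier L).1 0 = 1 := by rw [OEaux.one_coeff hmul]; simp
    rw [h, OEaux.zero_coeff hadd] at h1
    exact one_ne_zero h1.symm
  have hlead : ∀ x : OECarrier L, x ≠ 0 → ∃ (k : ℕ) (N : ℤ), ‖x.1 N‖ = ‖πL‖ ^ k ∧
      (∀ n, ‖x.1 n‖ ≤ ‖πL‖ ^ k) ∧ ∀ n < N, ‖x.1 n‖ < ‖πL‖ ^ k :=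
    fun x hx => OEaux.exists_lead hπ0 hπ1 hπunif x (OEaux.exists_ne_zero hadd x hx)
  haveI hnzd : NoZeroDivisors (OECarrier L) := by
    refine ⟨fun {a b} hab => ?_⟩
    by_contra hcon
    push_neg at hcon
    obtain ⟨ha, hb⟩ := hcon
    obtain ⟨ka, Na, haN, hab', halt⟩ := hlead a ha
    obtain ⟨kb, Nb, hbN, hbb, hblt⟩ := hlead b hb
    have hm := OEaux.lead_mul hmul hπ0 hπ1 hπunif a b haN hab' halt hbN hbb hblt
    rw [hab, OEaux.zero_coeff hadd, norm_zero] at hm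
    exact absurd hm.symm (ne_of_gt (by positivity))
  haveI hD : IsDomain (OECarrier L) := NoZeroDivisors.to_isDomain _
  have hπsN : ‖πser.1 0‖ = ‖πL‖ ^ 1 := by
    rw [hπs, OEaux.delta_coeff, if_pos rfl, pow_one]
  have hπsb : ∀ n, ‖πser.1 n‖ ≤ ‖πL‖ ^ 1 := by
    intro n
    rw [hπs, OEaux.delta_coeff, pow_one]
    split
    · exact le_refl _
    · rw [norm_zero]; exact hr0.le
  have hπslt : ∀ n < (0:ℤ), ‖πser.1 n‖ < ‖πL‖ ^ 1 := by
    intro n hn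
    rw [hπs, OEaux.delta_coeff, if_neg hn.ne, norm_zero, pow_one]
    exact hr0
  have hπs0 : πser ≠ 0 := by
    intro h
    have h2 : πser.1 0 = (0 : OECarrier L).1 0 := by rw [h]
    rw [hπs, OEaux.delta_coeff, if_pos rfl, OEaux.zero_coeff hadd] at h2
    exact hπ0 h2
  have h1N : ‖(1 : OECarrier L).1 0‖ = ‖πL‖ ^ 0 := by
    rw [OEaux.one_coeff hmul, if_pos rfl, pow_zero, norm_one]
  have h1b : ∀ n, ‖(1 : OECarrier L).1 n‖ ≤ ‖πL‖ ^ 0 := by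
    intro n
    rw [pow_zero]
    exact (1 : OECarrier L).2.1 n
  have hunit_of : ∀ (x : OECarrier L) (N : ℤ), ‖x.1 N‖ = 1 → (∀ n < N, ‖x.1 n‖ < 1) →
      IsUnit x := fun x N h1 h2 =>
    OEaux.isUnit_of_lead_one hadd hmul hπ0 hπ1 hπunif x N h1 h2
  have hk_of_unit : ∀ (x : OECarrier L) (k : ℕ) (N : ℤ), IsUnit x →
      ‖x.1 N‖ = ‖πL‖ ^ k → (∀ n, ‖x.1 n‖ ≤ ‖πL‖ ^ k) → (∀ n < N, ‖x.1 n‖ < ‖πL‖ ^ k) →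
      k = 0 := by
    intro x k N hx hxN hxb hxlt
    obtain ⟨v, hv⟩ := hx.exists_right_inv
    have hvne : v ≠ 0 := by
      intro h
      rw [h, mul_zero] at hv
      exact zero_ne_one hv
    obtain ⟨kv, Nv, hvN, hvb, hvlt⟩ := hlead v hvne
    have hm := OEaux.lead_mul hmul hπ0 hπ1 hπunif x v hxN hxb hxlt hvN hvb hvlt
    rw [hv] at hm
    have hbd : ∀ n, ‖(1 : OECarrier L).1 n‖ ≤ ‖πL‖ ^ (k + kv) := by
      intro n
      have h3 := OEaux.mul_coeff_le hmul x v (pow_nonneg hr0.le k) (pow_nonneg hr0.le kv)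
        hxb hvb n
      rw [hv, ← pow_add] at h3
      exact h3
    have := OEaux.lead_unique hadd hmul hπ0 hπ1 hπunif hm hbd h1N h1b
    omega
  have hirr : Irreducible πser := by
    constructor
    · intro hu
      have := hk_of_unit πser 1 0 hu hπsN hπsb hπslt
      omega
    · intro a b hab
      by_contra hcon
      push_neg at hcon
      obtain ⟨hna, hnb⟩ := hcon
      have ha : a ≠ 0 := by rintro rfl; rw [zero_mul] at hab; exact hπs0 hab
      have hb : b ≠ 0 := by rintro rfl; rw [mul_zero] at hab; exact hπs0 hab
      obtain ⟨ka, Na, haN, hab', halt⟩ := hlead a ha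
      obtain ⟨kb, Nb, hbN, hbb, hblt⟩ := hlead b hb
      have hm := OEaux.lead_mul hmul hπ0 hπ1 hπunif a b haN hab' halt hbN hbb hblt
      rw [← hab] at hm
      have hbd : ∀ n, ‖πser.1 n‖ ≤ ‖πL‖ ^ (ka + kb) := by
        intro n
        have h3 := OEaux.mul_coeff_le hmul a b (pow_nonneg hr0.le ka) (pow_nonneg hr0.le kb)
          hab' hbb n
        rw [← hab, ← pow_add] at h3
        exact h3
      have hkk := OEaux.lead_unique hadd hmul hπ0 hπ1 hπunif hm hbd hπsN hπsb
      rcases (by omega : ka = 0 ∨ kb = 0) with h0 | h0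
      · subst h0
        refine hna (hunit_of a Na ?_ ?_)
        · rwa [pow_zero] at haN
        · intro n hn
          have := halt n hn
          rwa [pow_zero] at this
      · subst h0
        refine hnb (hunit_of b Nb ?_ ?_)
        · rwa [pow_zero] at hbN
        · intro n hn
          have := hblt n hn
          rwa [pow_zero] at this
  have hfac : ∀ x : OECarrier L, x ≠ 0 → ∃ n : ℕ, Associated (πser ^ n) x := by
    intro x hx
    obtain ⟨k, b, N, hN, hltb, heq⟩ := OEaux.factor hadd hmul hπ0 hπ1 hπunif x hx
    have hbu : IsUnit b := hunit_of b N hN hltb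
    exact ⟨k, ⟨hbu.unit, by rw [IsUnit.unit_spec]; exact heq.symm⟩⟩
  have hDVR : IsDiscreteValuationRing (OECarrier L) :=
    IsDiscreteValuationRing.ofHasUnitMulPowIrreducibleFactorization
      ⟨πser, hirr, fun {x} hx => hfac x hx⟩
  refine ⟨hD, hDVR, πser, ?_, ?_⟩
  · funext n
    rw [hπs, OEaux.delta_coeff]
  · intro hL
    haveI := hDVR
    have hmax : IsLocalRing.maximalIdeal (OECarrier L) = Ideal.span {πser} :=
      hirr.maximalIdeal_eq
    exact hmax
end

section
/- Let M be a complete normed ℚ_p-module and γ a continuous linear automorphism of M with operator valuation v(γ-1) ≥ 2. Then exp(log γ) = γ, where log γ = ∑_{i≥1} (-1)^{i-1}(γ-1)^i/i and exp 𝓛 = ∑_{i≥0} 𝓛^i/i!. -/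
set_option linter.unusedSectionVars false
set_option maxHeartbeats 1000000
set_option synthInstance.maxHeartbeats 400000

open PowerSeries Finset

noncomputable section ExpLogFormal

variable (K : Type*) [Field K] [CharZero K]

/-- The formal logarithm series `∑_{j≥1} (-1)^{j-1} X^j / j`. -/
def expLogAuxL : PowerSeries K := PowerSeries.mk fun j => if j = 0 then 0 else (-1 : K) ^ (j - 1) / j

lemma expLogAuxL_coeff (j : ℕ) :
    coeff j (expLogAuxL K) = if j = 0 then 0 else (-1 : K) ^ (j - 1) / j :=
  coeff_mk _ _

lemma expLogAuxL_const : constantCoeff (expLogAuxL K) = 0 := by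
  rw [← coeff_zero_eq_constantCoeff_apply, expLogAuxL_coeff]; simp

lemma expLogAux_one_add_X_mul_dL :
    (1 + X) * d⁄dX K (expLogAuxL K) = 1 := by
  ext n
  rw [add_mul, one_mul, map_add, coeff_one]
  rcases n with _ | m
  · simp [coeff_zero_X_mul, coeff_derivative, expLogAuxL_coeff]
  · rw [coeff_succ_X_mul, coeff_derivative, coeff_derivative, expLogAuxL_coeff,
      expLogAuxL_coeff]
    have h1 : ((m:K) + 1) ≠ 0 := Nat.cast_add_one_ne_zero m
    have h2 : ((m:K) + 1 + 1) ≠ 0 := by have := Nat.cast_add_one_ne_zero (R := K) (m+1); push_cast at this; exact this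
    simp only [Nat.succ_ne_zero, if_false, Nat.add_sub_cancel]
    push_cast
    field_simp
    ring


/-- Truncated exponential of the log series. -/
def expLogAuxG (n : ℕ) : PowerSeries K :=
  ∑ i ∈ range n, (i.factorial : K)⁻¹ • (expLogAuxL K) ^ i

lemma expLogAuxL_pow_coeff_eq_zero {i k : ℕ} (h : k < i) :
    coeff k ((expLogAuxL K) ^ i) = 0 := by
  have hX : (X : K⟦X⟧) ^ i ∣ (expLogAuxL K) ^ i :=
    pow_dvd_pow_of_dvd (X_dvd_iff.mpr (expLogAuxL_const K)) i
  exact X_pow_dvd_iff.mp hX k h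

lemma expLogAuxG_coeff_stable {k m n : ℕ} (hm : k < m) (hn : k < n) :
    coeff k (expLogAuxG K m) = coeff k (expLogAuxG K n) := by
  have key : ∀ N, k < N → coeff k (expLogAuxG K N) = coeff k (expLogAuxG K (k+1)) := by
    intro N hN
    unfold expLogAuxG
    rw [map_sum, map_sum]
    rw [← Finset.sum_range_add_sum_Ico _ (Nat.succ_le_of_lt hN)]
    have : ∑ i ∈ Finset.Ico (k+1) N, coeff k ((i.factorial : K)⁻¹ • (expLogAuxL K) ^ i) = 0 := by
      refine Finset.sum_eq_zero fun i hi => ?_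
      rw [map_smul, expLogAuxL_pow_coeff_eq_zero K (Nat.lt_of_lt_of_le (Nat.lt_succ_self k) (Finset.mem_Ico.mp hi).1), smul_zero]
    rw [this, add_zero]
  rw [key m hm, key n hn]

/-- The `k`-th coefficient of the exponential of the log series. -/
def expLogAuxg (k : ℕ) : K := coeff k (expLogAuxG K (k + 1))

lemma expLogAuxG_coeff_eq_g {k n : ℕ} (h : k < n) :
    coeff k (expLogAuxG K n) = expLogAuxg K k :=
  expLogAuxG_coeff_stable K h (Nat.lt_succ_self k)

lemma expLogAuxG_deriv (n : ℕ) :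
    d⁄dX K (expLogAuxG K (n + 1)) = d⁄dX K (expLogAuxL K) * expLogAuxG K n := by
  unfold expLogAuxG
  rw [map_sum, Finset.sum_range_succ', Finset.mul_sum]
  have h0 : d⁄dX K ((Nat.factorial 0 : K)⁻¹ • (expLogAuxL K) ^ 0) = 0 := by
    simp
  rw [h0, add_zero]
  refine Finset.sum_congr rfl fun i _ => ?_
  rw [Derivation.map_smul, Derivation.leibniz_pow, Nat.add_sub_cancel, nsmul_eq_mul,
    PowerSeries.smul_eq_C_mul, PowerSeries.smul_eq_C_mul, Nat.factorial_succ, Nat.cast_mul,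
    mul_inv, map_mul]
  have hc : ((i + 1 : ℕ) : K⟦X⟧) = C ((i + 1 : ℕ) : K) := by
    rw [← map_natCast C (i + 1)]
  have hne : ((i + 1 : ℕ) : K) ≠ 0 := by
    exact_mod_cast Nat.succ_ne_zero i
  have key : C (((i + 1 : ℕ) : K))⁻¹ * ((i + 1 : ℕ) : K⟦X⟧) = 1 := by
    rw [hc, ← map_mul, inv_mul_cancel₀ hne, map_one]
  calc C (((i + 1 : ℕ) : K))⁻¹ * C ((Nat.factorial i : K)⁻¹) *
        (((i + 1 : ℕ) : K⟦X⟧) * ((expLogAuxL K) ^ i * d⁄dX K (expLogAuxL K)))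
      = (C (((i + 1 : ℕ) : K))⁻¹ * ((i + 1 : ℕ) : K⟦X⟧)) *
        (C ((Nat.factorial i : K)⁻¹) * ((expLogAuxL K) ^ i * d⁄dX K (expLogAuxL K))) := by ring
    _ = d⁄dX K (expLogAuxL K) * (C ((Nat.factorial i : K)⁻¹) * (expLogAuxL K) ^ i) := by
        rw [key, one_mul]; ring

lemma expLogAux_one_add_X_mul_dG (n : ℕ) :
    (1 + X) * d⁄dX K (expLogAuxG K (n + 1)) = expLogAuxG K n := by
  rw [expLogAuxG_deriv, ← mul_assoc, expLogAux_one_add_X_mul_dL, one_mul]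

lemma expLogAuxg_zero : expLogAuxg K 0 = 1 := by
  unfold expLogAuxg expLogAuxG
  simp

lemma expLogAuxg_succ (k : ℕ) :
    ((k : K) + 1) * expLogAuxg K (k + 1) = (1 - (k : K)) * expLogAuxg K k := by
  have H2 := congrArg (coeff k) (expLogAux_one_add_X_mul_dG K (k + 1))
  rw [add_mul, one_mul, map_add, coeff_derivative] at H2
  have hg1 : coeff (k + 1) (expLogAuxG K (k + 2)) = expLogAuxg K (k + 1) :=
    expLogAuxG_coeff_eq_g K (by omega)
  have hgk : coeff k (expLogAuxG K (k + 1)) = expLogAuxg K k :=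
    expLogAuxG_coeff_eq_g K (by omega)
  rw [hg1, hgk] at H2
  rcases k with _ | m
  · rw [coeff_zero_X_mul] at H2
    push_cast at H2 ⊢
    linear_combination H2
  · rw [coeff_succ_X_mul, coeff_derivative] at H2
    have hgm : coeff (m + 1) (expLogAuxG K (m + 1 + 2)) = expLogAuxg K (m + 1) :=
      expLogAuxG_coeff_eq_g K (by omega)
    rw [hgm] at H2
    push_cast at H2 ⊢
    linear_combination H2

lemma expLogAuxg_eq (k : ℕ) : expLogAuxg K k = if k ≤ 1 then 1 else 0 := by
  induction k with
  | zero => simpa using expLogAuxg_zero K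
  | succ m ih =>
    have H := expLogAuxg_succ K m
    rw [ih] at H
    have hne : ((m : K) + 1) ≠ 0 := Nat.cast_add_one_ne_zero m
    rcases Nat.lt_or_ge m 1 with hm | hm
    · interval_cases m
      · simp only [Nat.le_refl, if_true]
        simpa using H
    · have hm2 : ¬ (m + 1 ≤ 1) := by omega
      rw [if_neg hm2]
      rcases Nat.eq_or_lt_of_le hm with h1 | h1
      · -- m = 1
        have hm1 : m = 1 := h1.symm
        subst hm1
        simp only [Nat.le_refl, if_true, mul_one] at H
        have hne2 : ((1 : K) + 1) ≠ 0 := by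
          have := Nat.cast_add_one_ne_zero (R := K) 1
          simpa using this
        have H' : ((1 : K) + 1) * expLogAuxg K (1 + 1) = 0 := by
          push_cast at H
          linear_combination H
        exact (mul_eq_zero.mp H').resolve_left hne2
      · have hm1 : ¬ (m ≤ 1) := by omega
        rw [if_neg hm1, mul_zero] at H
        exact (mul_eq_zero.mp H).resolve_left hne

/-- The key formal identity: coefficients of `exp(log(1+X))` are those of `1 + X`. -/
lemma expLogAux_formal {k n : ℕ} (h : k < n) :
    (∑ i ∈ range n, (i.factorial : K)⁻¹ * coeff k ((expLogAuxL K) ^ i)) =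
      if k ≤ 1 then 1 else 0 := by
  have : coeff k (expLogAuxG K n) =
      ∑ i ∈ range n, (i.factorial : K)⁻¹ * coeff k ((expLogAuxL K) ^ i) := by
    unfold expLogAuxG
    rw [map_sum]
    exact Finset.sum_congr rfl fun i _ => by rw [map_smul, smul_eq_mul]
  rw [← this, expLogAuxG_coeff_eq_g K h, expLogAuxg_eq]

open Polynomial in
/-- Truncated log polynomial. -/
def expLogAuxP (n : ℕ) : Polynomial K :=
  ∑ j ∈ range n, Polynomial.C ((-1 : K) ^ j / (j + 1)) * Polynomial.X ^ (j + 1)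

open Polynomial in
/-- Truncated exp of truncated log polynomial. -/
def expLogAuxQ (n : ℕ) : Polynomial K :=
  ∑ i ∈ range n, Polynomial.C ((i.factorial : K)⁻¹) * (expLogAuxP K n) ^ i

lemma expLogAuxP_coeff (n m : ℕ) :
    (expLogAuxP K n).coeff m =
      if 1 ≤ m ∧ m ≤ n then (-1 : K) ^ (m - 1) / m else 0 := by
  unfold expLogAuxP
  rw [Polynomial.finset_sum_coeff]
  simp only [Polynomial.coeff_C_mul, Polynomial.coeff_X_pow]
  rcases Nat.lt_or_ge 0 m with hm | hm
  · rcases Nat.lt_or_ge n (m) with hn | hn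
    · rw [if_neg (by omega)]
      refine Finset.sum_eq_zero fun j hj => ?_
      rw [if_neg (by simp at hj; omega), mul_zero]
    · rw [if_pos ⟨hm, hn⟩]
      rw [Finset.sum_eq_single (m - 1)]
      · rw [if_pos (by omega), mul_one]
        congr 1
        push_cast [Nat.sub_add_cancel hm]
        rw [Nat.cast_sub hm]
        push_cast
        ring_nf
      · intro j hj hjm
        rw [if_neg (by omega), mul_zero]
      · intro h
        exact absurd (Finset.mem_range.mpr (by omega)) h
  · rw [if_neg (by omega)]
    refine Finset.sum_eq_zero fun j hj => ?_
    rw [if_neg (by omega), mul_zero]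

lemma expLogAuxP_coe_coeff_eq (n m : ℕ) (h : m ≤ n) :
    coeff m ((expLogAuxP K n : K⟦X⟧)) = coeff m (expLogAuxL K) := by
  rw [Polynomial.coeff_coe, expLogAuxP_coeff, expLogAuxL_coeff]
  rcases Nat.eq_zero_or_pos m with rfl | hm
  · simp
  · rw [if_pos ⟨hm, h⟩, if_neg (by omega)]

lemma expLogAux_X_pow_dvd (n : ℕ) :
    (X : K⟦X⟧) ^ (n + 1) ∣ (expLogAuxL K - (expLogAuxP K n : K⟦X⟧)) := by
  rw [X_pow_dvd_iff]
  intro m hm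
  rw [map_sub, expLogAuxP_coe_coeff_eq K n m (by omega), sub_self]

lemma expLogAuxP_pow_coeff_eq (n i k : ℕ) (hk : k ≤ n) :
    coeff k (((expLogAuxP K n : K⟦X⟧)) ^ i) = coeff k ((expLogAuxL K) ^ i) := by
  have hdvd : (X : K⟦X⟧) ^ (n + 1) ∣ ((expLogAuxL K) ^ i - ((expLogAuxP K n : K⟦X⟧)) ^ i) :=
    dvd_trans (expLogAux_X_pow_dvd K n) (sub_dvd_pow_sub_pow _ _ i)
  have := X_pow_dvd_iff.mp hdvd k (by omega)
  rw [map_sub] at this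
  linear_combination -this

/-- Coefficients of `Q n` below degree `n` match `1 + X`. -/
lemma expLogAuxQ_coeff_lt {n k : ℕ} (h : k < n) :
    (expLogAuxQ K n).coeff k = if k ≤ 1 then 1 else 0 := by
  have : ((expLogAuxQ K n : K⟦X⟧)) = ∑ i ∈ range n,
      PowerSeries.C ((i.factorial : K)⁻¹) * ((expLogAuxP K n : K⟦X⟧)) ^ i := by
    unfold expLogAuxQ
    rw [show ((((∑ i ∈ range n, Polynomial.C ((i.factorial : K)⁻¹) * (expLogAuxP K n) ^ i) : Polynomial K)) : K⟦X⟧)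
        = Polynomial.coeToPowerSeries.ringHom (∑ i ∈ range n, Polynomial.C ((i.factorial : K)⁻¹) * (expLogAuxP K n) ^ i) from rfl,
      map_sum]
    refine Finset.sum_congr rfl fun i _ => ?_
    simp [Polynomial.coeToPowerSeries.ringHom_apply, Polynomial.coe_pow, Polynomial.coe_C]
  have h2 := congrArg (coeff k) this
  rw [Polynomial.coeff_coe] at h2
  rw [h2, map_sum, ← expLogAux_formal K h]
  refine Finset.sum_congr rfl fun i _ => ?_
  rw [coeff_C_mul, expLogAuxP_pow_coeff_eq K n i k (by omega)]

end ExpLogFormal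

section PadicEstimates

variable {p : ℕ} [hp : Fact p.Prime]

lemma expLogAux_padicValNat_lt {n : ℕ} (hn : n ≠ 0) : padicValNat p n < n := by
  have h1 : p ^ padicValNat p n ∣ n := pow_padicValNat_dvd
  have h2 : p ^ padicValNat p n ≤ n := Nat.le_of_dvd (Nat.pos_of_ne_zero hn) h1
  by_contra hcon
  push_neg at hcon
  have : n < 2 ^ n := Nat.lt_two_pow_self
  have h3 : (2 : ℕ) ^ n ≤ p ^ n := Nat.pow_le_pow_left hp.out.two_le n
  have h4 : p ^ n ≤ p ^ padicValNat p n := Nat.pow_le_pow_right hp.out.pos hcon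
  omega

lemma expLogAux_padicValNat_factorial_le (i : ℕ) : padicValNat p (i.factorial) ≤ i := by
  have h := sub_one_mul_padicValNat_factorial (p := p) i
  have h2 : padicValNat p (i.factorial) ≤ (p - 1) * padicValNat p (i.factorial) :=
    Nat.le_mul_of_pos_left _ (by have := hp.out.two_le; omega)
  omega

lemma expLogAux_norm_natCast_inv_le (n k : ℕ) (hn : n ≠ 0) (hv : padicValNat p n ≤ k) :
    ‖((n : ℚ_[p]))⁻¹‖ ≤ (p : ℝ) ^ (k : ℤ) := by
  have hcast : ((n : ℚ_[p])) ≠ 0 := Nat.cast_ne_zero.mpr hn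
  rw [norm_inv, Padic.norm_eq_zpow_neg_valuation hcast, Padic.valuation_natCast, ← zpow_neg, neg_neg]
  have hp1 : (1 : ℝ) ≤ (p : ℝ) := by exact_mod_cast hp.out.one_le
  exact zpow_le_zpow_right₀ hp1 (by exact_mod_cast hv)

lemma expLogAux_norm_coeff_P (n m : ℕ) :
    ‖(expLogAuxP ℚ_[p] n).coeff m‖ ≤ (p : ℝ) ^ ((m : ℤ) - 1) := by
  rw [expLogAuxP_coeff]
  split_ifs with h
  · have hm : m ≠ 0 := by omega
    rw [div_eq_mul_inv, norm_mul]
    have h1 : ‖(-1 : ℚ_[p]) ^ (m - 1)‖ = 1 := by simp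
    rw [h1, one_mul]
    have h2 : ((m : ℚ_[p]))⁻¹ = (((m : ℕ) : ℚ_[p]))⁻¹ := by norm_cast
    rw [h2]
    have h3 : padicValNat p m ≤ m - 1 := by
      have := expLogAux_padicValNat_lt (p := p) hm; omega
    have := expLogAux_norm_natCast_inv_le (p := p) m (m - 1) hm h3
    calc ‖((m : ℚ_[p]) : ℚ_[p])⁻¹‖ ≤ (p : ℝ) ^ ((m - 1 : ℕ) : ℤ) := this
      _ = (p : ℝ) ^ ((m : ℤ) - 1) := by
          congr 1
          omega
  · rw [norm_zero]
    positivity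

lemma expLogAux_norm_coeff_P_pow (n i m : ℕ) :
    ‖((expLogAuxP ℚ_[p] n) ^ i).coeff m‖ ≤ (p : ℝ) ^ ((m : ℤ) - i) := by
  induction i generalizing m with
  | zero =>
    rw [pow_zero, Polynomial.coeff_one]
    split_ifs with h
    · rw [norm_one]
      simp only [Nat.cast_zero, sub_zero]
      exact one_le_zpow₀ (by exact_mod_cast hp.out.one_le) (by positivity)
    · rw [norm_zero]; positivity
  | succ i ih =>
    rw [pow_succ', Polynomial.coeff_mul]
    refine IsUltrametricDist.norm_sum_le_of_forall_le_of_nonneg (by positivity) ?_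
    rintro ⟨a, b⟩ hab
    have hab' : a + b = m := Finset.HasAntidiagonal.mem_antidiagonal.mp hab
    calc ‖(expLogAuxP ℚ_[p] n).coeff a * ((expLogAuxP ℚ_[p] n) ^ i).coeff b‖
        = ‖(expLogAuxP ℚ_[p] n).coeff a‖ * ‖((expLogAuxP ℚ_[p] n) ^ i).coeff b‖ := by
          rw [norm_mul]
      _ ≤ (p : ℝ) ^ ((a : ℤ) - 1) * (p : ℝ) ^ ((b : ℤ) - i) := by
          refine mul_le_mul (expLogAux_norm_coeff_P n a) (ih b) (norm_nonneg _) (by positivity)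
      _ = (p : ℝ) ^ ((m : ℤ) - (i + 1)) := by
          rw [← zpow_add₀ (by exact_mod_cast hp.out.pos.ne')]
          congr 1
          push_cast
          omega

lemma expLogAux_norm_coeff_Q (n k : ℕ) :
    ‖(expLogAuxQ ℚ_[p] n).coeff k‖ ≤ (p : ℝ) ^ (k : ℤ) := by
  unfold expLogAuxQ
  rw [Polynomial.finset_sum_coeff]
  refine IsUltrametricDist.norm_sum_le_of_forall_le_of_nonneg (by positivity) ?_
  intro i _
  rw [Polynomial.coeff_C_mul, norm_mul]
  calc ‖((i.factorial : ℚ_[p]))⁻¹‖ * ‖((expLogAuxP ℚ_[p] n) ^ i).coeff k‖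
      ≤ (p : ℝ) ^ (i : ℤ) * (p : ℝ) ^ ((k : ℤ) - i) := by
        refine mul_le_mul ?_ (expLogAux_norm_coeff_P_pow n i k) (norm_nonneg _) (by positivity)
        exact_mod_cast expLogAux_norm_natCast_inv_le i.factorial i i.factorial_ne_zero
          (expLogAux_padicValNat_factorial_le i)
    _ = (p : ℝ) ^ (k : ℤ) := by
        rw [← zpow_add₀ (by exact_mod_cast hp.out.pos.ne')]
        congr 1
        omega

end PadicEstimates

section Analytic

lemma expLogAux_ultraCLM {𝕜 : Type*} [NontriviallyNormedField 𝕜] {M : Type*}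
    [NormedAddCommGroup M] [NormedSpace 𝕜 M] [IsUltrametricDist M] :
    IsUltrametricDist (M →L[𝕜] M) := by
  refine IsUltrametricDist.isUltrametricDist_of_forall_norm_add_le_max_norm fun f g => ?_
  refine ContinuousLinearMap.opNorm_le_bound _ (le_max_of_le_left (norm_nonneg f)) fun z => ?_
  calc ‖(f + g) z‖ = ‖f z + g z‖ := rfl
    _ ≤ max ‖f z‖ ‖g z‖ := IsUltrametricDist.norm_add_le_max _ _
    _ ≤ max (‖f‖ * ‖z‖) (‖g‖ * ‖z‖) :=
        max_le_max (f.le_opNorm z) (g.le_opNorm z)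
    _ = max ‖f‖ ‖g‖ * ‖z‖ := (max_mul_of_nonneg _ _ (norm_nonneg z)).symm

lemma expLogAux_pow_sub_pow {A : Type*} [NormedRing A] [IsUltrametricDist A] (a b : A)
    {C D : ℝ} (hC : 0 ≤ C) (hD : 0 ≤ D) (ha : ‖a‖ ≤ C) (hb : ‖b‖ ≤ C) (hab : ‖a - b‖ ≤ D) :
    ∀ i : ℕ, ‖a ^ (i + 1) - b ^ (i + 1)‖ ≤ D * C ^ i := by
  intro i
  induction i with
  | zero => simpa using hab
  | succ i ih =>
    have key : a ^ (i + 2) - b ^ (i + 2) = a * (a ^ (i + 1) - b ^ (i + 1)) + (a - b) * b ^ (i + 1) := by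
      rw [mul_sub, sub_mul, ← pow_succ' a (i + 1), ← pow_succ' b (i + 1)]
      abel
    rw [key]
    refine le_trans (IsUltrametricDist.norm_add_le_max _ _) (max_le ?_ ?_)
    · calc ‖a * (a ^ (i + 1) - b ^ (i + 1))‖ ≤ ‖a‖ * ‖a ^ (i + 1) - b ^ (i + 1)‖ := norm_mul_le _ _
        _ ≤ C * (D * C ^ i) := mul_le_mul ha ih (norm_nonneg _) hC
        _ = D * C ^ (i + 1) := by ring
    · calc ‖(a - b) * b ^ (i + 1)‖ ≤ ‖a - b‖ * ‖b ^ (i + 1)‖ := norm_mul_le _ _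
        _ ≤ D * C ^ (i + 1) := by
            refine mul_le_mul hab ?_ (norm_nonneg _) hD
            calc ‖b ^ (i + 1)‖ ≤ ‖b‖ ^ (i + 1) := norm_pow_le' b (Nat.succ_pos i)
              _ ≤ C ^ (i + 1) := pow_le_pow_left₀ (norm_nonneg b) hb _

end Analytic

open Filter Topology in
theorem exp_log_eq_self
    (p : ℕ) [Fact p.Prime]
    {M : Type*} [NormedAddCommGroup M] [NormedSpace ℚ_[p] M] [CompleteSpace M]
    [IsUltrametricDist M]
    (γ : M →L[ℚ_[p]] M) (hγunit : IsUnit γ)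
    (hγ : ∀ x : M, ‖(γ - 1) x‖ ≤ (p : ℝ) ^ (-2 : ℤ) * ‖x‖) :
    ∑' i : ℕ, ((i.factorial : ℚ_[p])⁻¹) •
        (∑' j : ℕ, ((-1 : ℚ_[p]) ^ j / (j + 1)) • (γ - 1) ^ (j + 1)) ^ i = γ := by
  classical
  haveI instU : IsUltrametricDist (M →L[ℚ_[p]] M) := expLogAux_ultraCLM
  have hp1R : (1 : ℝ) < (p : ℝ) := by exact_mod_cast (Fact.out : p.Prime).one_lt
  have hppos : (0 : ℝ) < (p : ℝ) := by positivity
  have hpne : (p : ℝ) ≠ 0 := hppos.ne'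
  -- zpow combination helper
  have hzp : ∀ (a b : ℤ), (p : ℝ) ^ a * (p : ℝ) ^ b = (p : ℝ) ^ (a + b) :=
    fun a b => (zpow_add₀ hpne a b).symm
  have hmono : ∀ {a b : ℤ}, a ≤ b → (p : ℝ) ^ a ≤ (p : ℝ) ^ b :=
    fun hab => zpow_le_zpow_right₀ hp1R.le hab
  set x : M →L[ℚ_[p]] M := γ - 1 with hxdef
  have hx : ‖x‖ ≤ (p : ℝ) ^ (-2 : ℤ) :=
    ContinuousLinearMap.opNorm_le_bound _ (by positivity) hγ
  set t : ℕ → (M →L[ℚ_[p]] M) := fun j => ((-1 : ℚ_[p]) ^ j / ((j : ℚ_[p]) + 1)) • x ^ (j + 1)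
    with htdef
  -- norm of coefficients
  have hcoef : ∀ j : ℕ, ‖((-1 : ℚ_[p]) ^ j / ((j : ℚ_[p]) + 1))‖ ≤ (p : ℝ) ^ (j : ℤ) := by
    intro j
    rw [div_eq_mul_inv, norm_mul]
    have h1 : ‖(-1 : ℚ_[p]) ^ j‖ = 1 := by simp
    rw [h1, one_mul]
    have h2 : ((j : ℚ_[p]) + 1) = (((j + 1 : ℕ)) : ℚ_[p]) := by push_cast; ring
    rw [h2]
    refine expLogAux_norm_natCast_inv_le (j + 1) j (Nat.succ_ne_zero j) ?_
    have := expLogAux_padicValNat_lt (p := p) (show j + 1 ≠ 0 by omega)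
    omega
  -- norm of powers of x
  have hxpow : ∀ k : ℕ, ‖x ^ k‖ ≤ (p : ℝ) ^ (-2 * (k : ℤ)) := by
    intro k
    rcases Nat.eq_zero_or_pos k with rfl | hk
    · simpa using (show ‖(1 : M →L[ℚ_[p]] M)‖ ≤ 1 from ContinuousLinearMap.norm_id_le)
    · calc ‖x ^ k‖ ≤ ‖x‖ ^ k := norm_pow_le' x hk
        _ ≤ ((p : ℝ) ^ (-2 : ℤ)) ^ k := pow_le_pow_left₀ (norm_nonneg x) hx k
        _ = (p : ℝ) ^ (-2 * (k : ℤ)) := by rw [← zpow_natCast, ← zpow_mul]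
  have ht : ∀ j : ℕ, ‖t j‖ ≤ (p : ℝ) ^ (-(j : ℤ) - 2) := by
    intro j
    simp only [htdef]
    calc ‖((-1 : ℚ_[p]) ^ j / ((j : ℚ_[p]) + 1)) • x ^ (j + 1)‖
        = ‖((-1 : ℚ_[p]) ^ j / ((j : ℚ_[p]) + 1))‖ * ‖x ^ (j + 1)‖ :=
          norm_smul ((-1 : ℚ_[p]) ^ j / ((j : ℚ_[p]) + 1)) (x ^ (j + 1))
      _ ≤ (p : ℝ) ^ (j : ℤ) * (p : ℝ) ^ (-2 * ((j + 1 : ℕ) : ℤ)) :=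
          mul_le_mul (hcoef j) (hxpow (j + 1)) (norm_nonneg _) (by positivity)
      _ ≤ (p : ℝ) ^ (-(j : ℤ) - 2) := by
          rw [hzp]
          refine hmono ?_
          push_cast
          omega
  -- geometric decay helper
  have hgeo : ∀ (c : ℤ), Tendsto (fun n : ℕ => (p : ℝ) ^ (-(n : ℤ) + c)) atTop (𝓝 0) := by
    intro c
    have heq : ∀ n : ℕ, (p : ℝ) ^ (-(n : ℤ) + c) = (p : ℝ) ^ c * ((p : ℝ)⁻¹) ^ n := by
      intro n
      have h9 : ((p : ℝ)⁻¹) ^ n = (p : ℝ) ^ (-(n : ℤ)) := by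
        rw [inv_pow, ← zpow_natCast, ← zpow_neg]
      rw [← hzp, mul_comm, h9]
    simp only [heq]
    have h := (tendsto_pow_atTop_nhds_zero_of_lt_one
      (by positivity : (0:ℝ) ≤ (p : ℝ)⁻¹) (inv_lt_one_of_one_lt₀ hp1R)).const_mul ((p : ℝ) ^ c)
    simpa using h
  have htzero : Tendsto t cofinite (𝓝 0) := by
    rw [Nat.cofinite_eq_atTop]
    refine squeeze_zero_norm ht ?_
    have := hgeo (-2)
    simpa [sub_eq_add_neg] using this
  have hts : Summable t := NonarchimedeanAddGroup.summable_of_tendsto_cofinite_zero htzero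
  set L : M →L[ℚ_[p]] M := ∑' j, t j with hLdef
  have hLnorm : ‖L‖ ≤ (p : ℝ) ^ (-2 : ℤ) :=
    IsUltrametricDist.norm_tsum_le_of_forall_le_of_nonneg (by positivity)
      fun j => (ht j).trans (hmono (by omega))
  set Ln : ℕ → (M →L[ℚ_[p]] M) := fun n => ∑ j ∈ Finset.range n, t j with hLndef
  have hLnnorm : ∀ n, ‖Ln n‖ ≤ (p : ℝ) ^ (-2 : ℤ) := by
    intro n
    refine IsUltrametricDist.norm_sum_le_of_forall_le_of_nonneg (by positivity) ?_
    exact fun j _ => (ht j).trans (hmono (by omega))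
  have hLtail : ∀ n : ℕ, ‖L - Ln n‖ ≤ (p : ℝ) ^ (-(n : ℤ) - 2) := by
    intro n
    have hkey := Summable.sum_add_tsum_nat_add n hts
    have : L - Ln n = ∑' j, t (j + n) := by
      rw [hLdef, hLndef, ← hkey]
      abel
    rw [this]
    refine IsUltrametricDist.norm_tsum_le_of_forall_le_of_nonneg (by positivity) fun j => ?_
    refine (ht (j + n)).trans (hmono ?_)
    push_cast
    omega
  set e : ℕ → (M →L[ℚ_[p]] M) := fun i => ((i.factorial : ℚ_[p])⁻¹) • L ^ i with hedef
  have hfact : ∀ i : ℕ, ‖((i.factorial : ℚ_[p]))⁻¹‖ ≤ (p : ℝ) ^ (i : ℤ) := fun i =>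
    expLogAux_norm_natCast_inv_le i.factorial i i.factorial_ne_zero
      (expLogAux_padicValNat_factorial_le i)
  have hLpow : ∀ i : ℕ, ‖L ^ i‖ ≤ (p : ℝ) ^ (-2 * (i : ℤ)) := by
    intro i
    rcases Nat.eq_zero_or_pos i with rfl | hi
    · simpa using (show ‖(1 : M →L[ℚ_[p]] M)‖ ≤ 1 from ContinuousLinearMap.norm_id_le)
    · calc ‖L ^ i‖ ≤ ‖L‖ ^ i := norm_pow_le' L hi
        _ ≤ ((p : ℝ) ^ (-2 : ℤ)) ^ i := pow_le_pow_left₀ (norm_nonneg L) hLnorm i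
        _ = (p : ℝ) ^ (-2 * (i : ℤ)) := by rw [← zpow_natCast, ← zpow_mul]
  have he : ∀ i : ℕ, ‖e i‖ ≤ (p : ℝ) ^ (-(i : ℤ)) := by
    intro i
    simp only [hedef]
    calc ‖((i.factorial : ℚ_[p])⁻¹) • L ^ i‖ = ‖((i.factorial : ℚ_[p]))⁻¹‖ * ‖L ^ i‖ :=
        norm_smul ((i.factorial : ℚ_[p])⁻¹) (L ^ i)
      _ ≤ (p : ℝ) ^ (i : ℤ) * (p : ℝ) ^ (-2 * (i : ℤ)) :=
        mul_le_mul (hfact i) (hLpow i) (norm_nonneg _) (by positivity)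
      _ ≤ (p : ℝ) ^ (-(i : ℤ)) := by rw [hzp]; exact hmono (by omega)
  have hes : Summable e := by
    refine NonarchimedeanAddGroup.summable_of_tendsto_cofinite_zero ?_
    rw [Nat.cofinite_eq_atTop]
    refine squeeze_zero_norm he ?_
    have := hgeo 0
    simpa using this
  set T : M →L[ℚ_[p]] M := ∑' i, e i with hTdef
  have hTtail : ∀ n : ℕ, ‖T - ∑ i ∈ Finset.range n, e i‖ ≤ (p : ℝ) ^ (-(n : ℤ)) := by
    intro n
    have hkey := Summable.sum_add_tsum_nat_add n hes
    have : T - ∑ i ∈ Finset.range n, e i = ∑' i, e (i + n) := by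
      rw [hTdef, ← hkey]; abel
    rw [this]
    refine IsUltrametricDist.norm_tsum_le_of_forall_le_of_nonneg (by positivity) fun i => ?_
    refine (he (i + n)).trans (hmono ?_)
    push_cast
    omega
  -- the polynomial evaluations
  set u : ℕ → (M →L[ℚ_[p]] M) := fun n => Polynomial.aeval x (expLogAuxQ ℚ_[p] n) with hudef
  have hPeval : ∀ n, Polynomial.aeval x (expLogAuxP ℚ_[p] n) = Ln n := by
    intro n
    rw [expLogAuxP, map_sum, hLndef]
    refine Finset.sum_congr rfl fun j _ => ?_
    rw [map_mul, Polynomial.aeval_C, map_pow, Polynomial.aeval_X, htdef]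
    exact (Algebra.smul_def _ _).symm
  have hueval : ∀ n, u n = ∑ i ∈ Finset.range n, ((i.factorial : ℚ_[p])⁻¹) • (Ln n) ^ i := by
    intro n
    simp only [hudef]
    rw [expLogAuxQ, map_sum]
    refine Finset.sum_congr rfl fun i _ => ?_
    rw [map_mul, Polynomial.aeval_C, map_pow, hPeval, Algebra.smul_def]
  -- step B : u n close to partial sums of e
  have hB : ∀ n : ℕ, ‖∑ i ∈ Finset.range n, e i - u n‖ ≤ (p : ℝ) ^ (-(n : ℤ)) := by
    intro n
    rw [hueval n, ← Finset.sum_sub_distrib]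
    refine IsUltrametricDist.norm_sum_le_of_forall_le_of_nonneg (by positivity) fun i _ => ?_
    have hterm : e i - ((i.factorial : ℚ_[p])⁻¹) • (Ln n) ^ i
        = ((i.factorial : ℚ_[p])⁻¹) • (L ^ i - (Ln n) ^ i) := by
      simp only [hedef]
      exact (smul_sub ((i.factorial : ℚ_[p])⁻¹) (L ^ i) ((Ln n) ^ i)).symm
    rw [hterm]
    rcases Nat.eq_zero_or_pos i with rfl | hi
    · simp
    · obtain ⟨j, rfl⟩ := Nat.exists_eq_add_of_lt hi
      rw [zero_add]
      have hps := expLogAux_pow_sub_pow L (Ln n) (by positivity) (by positivity)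
        hLnorm (hLnnorm n) (hLtail n) j
      calc ‖((j + 1).factorial : ℚ_[p])⁻¹ • (L ^ (j + 1) - (Ln n) ^ (j + 1))‖
          = ‖(((j + 1).factorial : ℚ_[p]))⁻¹‖ * ‖L ^ (j + 1) - (Ln n) ^ (j + 1)‖ :=
            norm_smul (((j + 1).factorial : ℚ_[p])⁻¹) (L ^ (j + 1) - (Ln n) ^ (j + 1))
        _ ≤ (p : ℝ) ^ ((j + 1 : ℕ) : ℤ) * ((p : ℝ) ^ (-(n : ℤ) - 2) * ((p : ℝ) ^ (-2 : ℤ)) ^ j) :=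
            mul_le_mul (hfact (j + 1)) hps (norm_nonneg _) (by positivity)
        _ ≤ (p : ℝ) ^ (-(n : ℤ)) := by
            rw [show ((p : ℝ) ^ (-2 : ℤ)) ^ j = (p : ℝ) ^ (-2 * (j : ℤ)) by
              rw [← zpow_natCast, ← zpow_mul], hzp, hzp]
            refine hmono ?_
            push_cast
            omega
  -- step C : u n close to 1 + x
  have hC : ∀ n : ℕ, 2 ≤ n → ‖u n - (1 + x)‖ ≤ (p : ℝ) ^ (-(n : ℤ)) := by
    intro n hn
    have hrepr : u n - (1 + x) = Polynomial.aeval x (expLogAuxQ ℚ_[p] n - (1 + Polynomial.X)) := by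
      rw [map_sub, map_add, map_one, Polynomial.aeval_X, hudef]
    rw [hrepr, Polynomial.aeval_eq_sum_range]
    refine IsUltrametricDist.norm_sum_le_of_forall_le_of_nonneg (by positivity) fun k _ => ?_
    have hcoeff1 : ∀ m : ℕ, (1 + Polynomial.X : Polynomial ℚ_[p]).coeff m
        = if m ≤ 1 then 1 else 0 := by
      intro m
      rw [Polynomial.coeff_add, Polynomial.coeff_one, Polynomial.coeff_X]
      rcases m with _ | _ | m <;> simp
    rcases Nat.lt_or_ge k n with hk | hk
    · have : (expLogAuxQ ℚ_[p] n - (1 + Polynomial.X)).coeff k = 0 := by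
        rw [Polynomial.coeff_sub, expLogAuxQ_coeff_lt ℚ_[p] hk, hcoeff1 k, sub_self]
      rw [this, zero_smul, norm_zero]
      positivity
    · have hQk : (expLogAuxQ ℚ_[p] n - (1 + Polynomial.X)).coeff k
          = (expLogAuxQ ℚ_[p] n).coeff k := by
        rw [Polynomial.coeff_sub, hcoeff1 k, if_neg (by omega), sub_zero]
      rw [hQk]
      calc ‖(expLogAuxQ ℚ_[p] n).coeff k • x ^ k‖
          = ‖(expLogAuxQ ℚ_[p] n).coeff k‖ * ‖x ^ k‖ :=
            norm_smul ((expLogAuxQ ℚ_[p] n).coeff k) (x ^ k)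
        _ ≤ (p : ℝ) ^ (k : ℤ) * (p : ℝ) ^ (-2 * (k : ℤ)) :=
            mul_le_mul (expLogAux_norm_coeff_Q n k) (hxpow k) (norm_nonneg _) (by positivity)
        _ ≤ (p : ℝ) ^ (-(n : ℤ)) := by
            rw [hzp]
            exact hmono (by omega)
  -- limits
  have hp0 : Tendsto (fun n : ℕ => (p : ℝ) ^ (-(n : ℤ))) atTop (𝓝 0) := by
    have := hgeo 0
    simpa using this
  have h1 : Tendsto u atTop (𝓝 T) := by
    rw [tendsto_iff_norm_sub_tendsto_zero]
    refine squeeze_zero_norm (fun n => ?_) hp0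
    rw [norm_norm]
    calc ‖u n - T‖ = ‖(u n - ∑ i ∈ Finset.range n, e i) + ((∑ i ∈ Finset.range n, e i) - T)‖ := by
          rw [sub_add_sub_cancel]
      _ ≤ max ‖u n - ∑ i ∈ Finset.range n, e i‖ ‖(∑ i ∈ Finset.range n, e i) - T‖ :=
          IsUltrametricDist.norm_add_le_max _ _
      _ ≤ (p : ℝ) ^ (-(n : ℤ)) := by
          refine max_le ?_ ?_
          · rw [norm_sub_rev]; exact hB n
          · rw [norm_sub_rev]; exact hTtail n
  have h2 : Tendsto u atTop (𝓝 (1 + x)) := by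
    rw [tendsto_iff_norm_sub_tendsto_zero]
    refine squeeze_zero_norm' ?_ hp0
    filter_upwards [eventually_ge_atTop 2] with n hn
    rw [norm_norm]
    exact hC n hn
  have hTx : T = 1 + x := tendsto_nhds_unique h1 h2
  have : T = γ := by rw [hTx, hxdef]; abel
  exact this
end

section
/- Let M be a complete normed ℚ_p-module and γ an automorphism with operator valuation v(γ-1) ≥ 2, so that log γ is defined. Then for every x ∈ M, (log γ)(x) = lim_{n→∞} (γ^{p^n} x - x)/p^n. -/
open Filter Finset Nat

set_option maxHeartbeats 1000000
set_option synthInstance.maxHeartbeats 400000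

section AuxLemmas

variable (p : ℕ) [Fact p.Prime]

private lemma aux_fact_norm (m : ℕ) : ((p : ℝ) ^ m)⁻¹ ≤ ‖((m !) : ℚ_[p])‖ := by
  have hp := (Fact.out : p.Prime)
  have hm : ((m !) : ℚ_[p]) ≠ 0 := Nat.cast_ne_zero.mpr m.factorial_ne_zero
  rw [Padic.norm_eq_zpow_neg_valuation hm, Padic.valuation_natCast]
  have hv : padicValNat p (m !) ≤ m := by
    have h := sub_one_mul_padicValNat_factorial (p := p) m
    have h1 : 1 ≤ p - 1 := Nat.le_sub_one_of_lt hp.one_lt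
    calc padicValNat p (m !) = 1 * padicValNat p (m !) := (one_mul _).symm
      _ ≤ (p - 1) * padicValNat p (m !) := Nat.mul_le_mul_right _ h1
      _ = m - (p.digits m).sum := h
      _ ≤ m := Nat.sub_le _ _
  have hp1 : (1 : ℝ) ≤ p := by exact_mod_cast hp.one_le
  calc ((p : ℝ) ^ m)⁻¹ = (p : ℝ) ^ (-(m : ℤ)) := by
        rw [zpow_neg, zpow_natCast]
    _ ≤ (p : ℝ) ^ (-(padicValNat p (m !) : ℤ)) := by
        apply zpow_le_zpow_right₀ hp1
        omega

private lemma aux_dvd (n k : ℕ) (hk : k < p ^ n) :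
    ((p : ℤ) ^ n) ∣ (((p ^ n - 1).choose k * k ! : ℕ) : ℤ) - (-1) ^ k * (k ! : ℤ) := by
  have hp := (Fact.out : p.Prime)
  have hN : 1 ≤ p ^ n := Nat.one_le_pow _ _ hp.pos
  have hk' : k ≤ p ^ n - 1 := Nat.le_sub_one_of_lt hk
  have hdesc : (p ^ n - 1).choose k * k ! = (p ^ n - 1).descFactorial k := by
    rw [Nat.choose_eq_descFactorial_div_factorial]
    exact Nat.div_mul_cancel (Nat.factorial_dvd_descFactorial _ _)
  have key : (((p ^ n - 1).descFactorial k : ℕ) : ZMod (p ^ n))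
      = (-1) ^ k * ((k ! : ℕ) : ZMod (p ^ n)) := by
    rw [Nat.descFactorial_eq_prod_range, Nat.cast_prod]
    have h1 : ∀ i ∈ Finset.range k,
        ((p ^ n - 1 - i : ℕ) : ZMod (p ^ n)) = (-1) * ((i : ZMod (p ^ n)) + 1) := by
      intro i hi
      have hi' : i ≤ p ^ n - 1 := le_trans (Finset.mem_range.mp hi).le hk'
      rw [Nat.cast_sub hi', Nat.cast_sub hN, ZMod.natCast_self]
      push_cast
      ring
    rw [Finset.prod_congr rfl h1, Finset.prod_mul_distrib, Finset.prod_const,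
      Finset.card_range]
    congr 1
    rw [← Finset.prod_range_add_one_eq_factorial k]
    push_cast
    rfl
  rw [← Int.natCast_pow, ← ZMod.intCast_zmod_eq_zero_iff_dvd, hdesc]
  push_cast
  rw [key]
  ring

private lemma aux_inv_norm (m : ℕ) : ‖(((m + 1 : ℕ)) : ℚ_[p])‖⁻¹ ≤ (p : ℝ) ^ (m + 1) := by
  have hp := (Fact.out : p.Prime)
  have hp0 : (0:ℝ) < p := by exact_mod_cast hp.pos
  have hpos : (0:ℝ) < ‖(((m + 1 : ℕ)) : ℚ_[p])‖ := by
    rw [norm_pos_iff]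
    exact Nat.cast_ne_zero.mpr m.succ_ne_zero
  have h1 : ‖(((m + 1)!) : ℚ_[p])‖ ≤ ‖(((m + 1 : ℕ)) : ℚ_[p])‖ := by
    rw [Nat.factorial_succ]
    push_cast
    rw [norm_mul]
    calc ‖((m:ℚ_[p]) + 1)‖ * ‖((m !) : ℚ_[p])‖ ≤ ‖((m:ℚ_[p]) + 1)‖ * 1 :=
          mul_le_mul_of_nonneg_left
            (by exact_mod_cast Padic.norm_int_le_one ((m ! : ℤ))) (norm_nonneg _)
      _ = _ := by rw [mul_one]
  rw [inv_le_comm₀ hpos (by positivity)]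
  exact (aux_fact_norm p (m + 1)).trans h1

private lemma aux_coeff (n k : ℕ) (hk : k < p ^ n) :
    ‖(((p ^ n).choose (k + 1) : ℚ_[p])) / (p : ℚ_[p]) ^ n - (-1) ^ k / ((k : ℚ_[p]) + 1)‖
      ≤ (p : ℝ) ^ (k + 1) * ((p : ℝ) ^ n)⁻¹ := by
  have hp := (Fact.out : p.Prime)
  have hN : 1 ≤ p ^ n := Nat.one_le_pow _ _ hp.pos
  have hpn : ((p : ℚ_[p]) ^ n) ≠ 0 := by
    apply pow_ne_zero; exact_mod_cast hp.ne_zero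
  have hk1 : ((k : ℚ_[p]) + 1) ≠ 0 := by
    have : (((k + 1 : ℕ)) : ℚ_[p]) ≠ 0 := Nat.cast_ne_zero.mpr (Nat.succ_ne_zero k)
    push_cast at this; exact this
  have hid : (((p ^ n).choose (k + 1) : ℚ_[p])) / (p : ℚ_[p]) ^ n
      = (((p ^ n - 1).choose k : ℚ_[p])) / ((k : ℚ_[p]) + 1) := by
    have h : p ^ n * (p ^ n - 1).choose k = (p ^ n).choose (k + 1) * (k + 1) := by
      have h0 := Nat.add_one_mul_choose_eq (p ^ n - 1) k
      rwa [Nat.sub_add_cancel hN] at h0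
    have h' : ((p : ℚ_[p])) ^ n * ((p ^ n - 1).choose k : ℚ_[p])
        = ((p ^ n).choose (k + 1) : ℚ_[p]) * (((k : ℚ_[p])) + 1) := by
      exact_mod_cast congrArg (fun t : ℕ => (t : ℚ_[p])) h
    rw [div_eq_div_iff hpn hk1]
    linear_combination -h'
  rw [hid]
  have hdiff : (((p ^ n - 1).choose k : ℚ_[p])) / ((k : ℚ_[p]) + 1) - (-1) ^ k / ((k : ℚ_[p]) + 1)
      = ((((((p ^ n - 1).choose k * k ! : ℕ) : ℤ) - (-1) ^ k * (k ! : ℤ)) : ℤ) : ℚ_[p])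
        / (((k + 1)! : ℚ_[p])) := by
    have hfac : (((k + 1)! : ℚ_[p])) = ((k : ℚ_[p]) + 1) * ((k ! : ℚ_[p])) := by
      rw [Nat.factorial_succ]; push_cast; ring
    have hfacne : (((k + 1)! : ℚ_[p])) ≠ 0 := Nat.cast_ne_zero.mpr (Nat.factorial_ne_zero _)
    have hkfne : ((k ! : ℚ_[p])) ≠ 0 := Nat.cast_ne_zero.mpr (Nat.factorial_ne_zero _)
    rw [← sub_div, hfac, div_eq_div_iff hk1 (mul_ne_zero hk1 hkfne)]
    push_cast
    ring
  rw [hdiff, norm_div]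
  have hnum : ‖(((((((p ^ n - 1).choose k * k ! : ℕ) : ℤ) - (-1) ^ k * (k ! : ℤ))) : ℤ) : ℚ_[p])‖
      ≤ ((p : ℝ) ^ n)⁻¹ := by
    have := (Padic.norm_int_le_pow_iff_dvd
      ((((p ^ n - 1).choose k * k ! : ℕ) : ℤ) - (-1) ^ k * (k ! : ℤ)) n).mpr (aux_dvd p n k hk)
    rwa [zpow_neg, zpow_natCast] at this
  have hp0 : (0:ℝ) < p := by exact_mod_cast hp.pos
  have hden : ‖(((k + 1)! : ℚ_[p]))‖⁻¹ ≤ (p : ℝ) ^ (k + 1) := by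
    have hpos : (0:ℝ) < ‖(((k + 1)! : ℚ_[p]))‖ := by
      rw [norm_pos_iff]; exact Nat.cast_ne_zero.mpr (Nat.factorial_ne_zero _)
    rw [inv_le_comm₀ hpos (by positivity)]
    exact aux_fact_norm p (k + 1)
  calc _ ≤ ((p : ℝ) ^ n)⁻¹ * ‖(((k + 1)! : ℚ_[p]))‖⁻¹ := by
        rw [div_eq_mul_inv]
        exact mul_le_mul_of_nonneg_right hnum (by positivity)
    _ ≤ ((p : ℝ) ^ n)⁻¹ * (p : ℝ) ^ (k + 1) := by
        exact mul_le_mul_of_nonneg_left hden (by positivity)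
    _ = _ := by ring

end AuxLemmas

/-- for `γ` an automorphism of a complete normed `ℚ_p`-module with
`v(γ-1) ≥ 2` (so that `log γ` is defined), for every `x`,
`(log γ)(x) = lim_{n→∞} (γ^{pⁿ} x - x)/pⁿ`. -/
theorem log_eq_lim
    (p : ℕ) [Fact p.Prime]
    {M : Type*} [NormedAddCommGroup M] [NormedSpace ℚ_[p] M] [CompleteSpace M]
    [IsUltrametricDist M]
    (γ : M →L[ℚ_[p]] M) (hγunit : IsUnit γ)
    (hγ : ∀ x : M, ‖(γ - 1) x‖ ≤ (p : ℝ) ^ (-2 : ℤ) * ‖x‖) (x : M) :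
    Tendsto (fun n : ℕ => ((p : ℚ_[p]) ^ n)⁻¹ • ((γ ^ (p ^ n)) x - x)) atTop
      (nhds ((∑' j : ℕ, ((-1 : ℚ_[p]) ^ j / (j + 1)) • (γ - 1) ^ (j + 1)) x)) := by
  have hp := (Fact.out : p.Prime)
  have hp0 : (0:ℝ) < p := by exact_mod_cast hp.pos
  have hp1 : (1:ℝ) < p := by exact_mod_cast hp.one_lt
  have hpinv1 : (p:ℝ)⁻¹ < 1 := inv_lt_one_of_one_lt₀ hp1
  have hpinv0 : (0:ℝ) ≤ (p:ℝ)⁻¹ := by positivity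
  set δ : M →L[ℚ_[p]] M := γ - 1 with hδdef
  set c : ℕ → ℚ_[p] := fun j => ((-1 : ℚ_[p]) ^ j / ((j : ℚ_[p]) + 1)) with hcdef
  -- pointwise bound for δ
  have hδ2 : ∀ y : M, ‖δ y‖ ≤ ((p:ℝ) ^ 2)⁻¹ * ‖y‖ := by
    intro y
    have h := hγ y
    rwa [show ((p:ℝ) ^ (-2:ℤ)) = ((p:ℝ)^2)⁻¹ by
      rw [zpow_neg]; norm_cast] at h
  have hδpow : ∀ (k : ℕ) (y : M), ‖(δ ^ k) y‖ ≤ (((p:ℝ) ^ 2)⁻¹) ^ k * ‖y‖ := by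
    intro k
    induction k with
    | zero => intro y; simp
    | succ k ih =>
      intro y
      have h1 : (δ ^ (k+1)) y = (δ ^ k) (δ y) := by
        rw [pow_succ]; rfl
      rw [h1]
      calc ‖(δ ^ k) (δ y)‖ ≤ (((p:ℝ)^2)⁻¹)^k * ‖δ y‖ := ih (δ y)
        _ ≤ (((p:ℝ)^2)⁻¹)^k * (((p:ℝ)^2)⁻¹ * ‖y‖) :=
            mul_le_mul_of_nonneg_left (hδ2 y) (by positivity)
        _ = (((p:ℝ)^2)⁻¹)^(k+1) * ‖y‖ := by ring
  have hδop : ‖δ‖ ≤ ((p:ℝ) ^ 2)⁻¹ :=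
    ContinuousLinearMap.opNorm_le_bound _ (by positivity) hδ2
  -- coefficient norm bound
  have hc : ∀ j : ℕ, ‖c j‖ ≤ (p:ℝ) ^ (j+1) := by
    intro j
    rw [hcdef]
    simp only [norm_div, norm_pow, norm_neg, norm_one, one_pow]
    rw [one_div]
    have := aux_inv_norm p j
    push_cast at this
    exact this
  -- combined numeric fact
  have hmulpow : ∀ j : ℕ, (p:ℝ) ^ (j+1) * (((p:ℝ)^2)⁻¹) ^ (j+1) = ((p:ℝ)⁻¹) ^ (j+1) := by
    intro j
    rw [← mul_pow]
    congr 1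
    field_simp
  -- summability of the operator series
  have hgeom : Summable (fun j : ℕ => ((p:ℝ)⁻¹) ^ (j+1)) := by
    simp only [pow_succ]
    exact (summable_geometric_of_lt_one hpinv0 hpinv1).mul_right _
  have hF : ∀ j : ℕ, ‖c j • δ ^ (j+1)‖ ≤ ((p:ℝ)⁻¹) ^ (j+1) := by
    intro j
    rw [norm_smul (c j) (δ ^ (j+1))]
    calc ‖c j‖ * ‖δ ^ (j+1)‖ ≤ (p:ℝ)^(j+1) * (((p:ℝ)^2)⁻¹)^(j+1) := by
          apply mul_le_mul (hc j) ?_ (norm_nonneg _) (by positivity)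
          exact le_trans (norm_pow_le' δ (Nat.succ_pos j)) (pow_le_pow_left₀ (norm_nonneg _) hδop _)
      _ = ((p:ℝ)⁻¹) ^ (j+1) := hmulpow j
  have hFsum : Summable (fun j : ℕ => c j • δ ^ (j+1)) :=
    Summable.of_norm_bounded hgeom hF
  -- pointwise series
  set a : ℕ → M := fun j => c j • ((δ ^ (j+1)) x) with hadef
  have ha_norm : ∀ j : ℕ, ‖a j‖ ≤ ((p:ℝ)⁻¹) ^ (j+1) * ‖x‖ := by
    intro j
    rw [hadef]
    simp only
    rw [norm_smul]
    calc ‖c j‖ * ‖(δ ^ (j+1)) x‖ ≤ (p:ℝ)^(j+1) * ((((p:ℝ)^2)⁻¹)^(j+1) * ‖x‖) := by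
          apply mul_le_mul (hc j) (hδpow (j+1) x) (norm_nonneg _) (by positivity)
      _ = ((p:ℝ)⁻¹) ^ (j+1) * ‖x‖ := by rw [← hmulpow j]; ring
  have ha_sum : Summable a :=
    Summable.of_norm_bounded (hgeom.mul_right ‖x‖) ha_norm
  -- identify the limit point
  have htsum : (∑' j : ℕ, ((-1 : ℚ_[p]) ^ j / ((j : ℚ_[p]) + 1)) • δ ^ (j + 1)) x
      = ∑' j : ℕ, a j := by
    have h := (ContinuousLinearMap.apply ℚ_[p] M x).map_tsum hFsum
    simp only [ContinuousLinearMap.apply_apply, ContinuousLinearMap.smul_apply] at h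
    exact h
  -- binomial expansion
  have hγδ : γ = δ + 1 := by rw [hδdef]; abel
  have hexp : ∀ n : ℕ, ((p:ℚ_[p]) ^ n)⁻¹ • ((γ ^ (p ^ n)) x - x)
      = ∑ k ∈ Finset.range (p ^ n),
          ((((p ^ n).choose (k+1) : ℚ_[p])) / (p:ℚ_[p]) ^ n) • ((δ ^ (k+1)) x) := by
    intro n
    have hpow : γ ^ (p ^ n)
        = ∑ k ∈ Finset.range (p ^ n + 1),
            δ ^ k * 1 ^ (p ^ n - k) * ((p ^ n).choose k : M →L[ℚ_[p]] M) := by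
      rw [hγδ]
      exact (Commute.one_right δ).add_pow (p ^ n)
    have h2 : (γ ^ (p ^ n)) x
        = ∑ k ∈ Finset.range (p ^ n + 1), (((p ^ n).choose k : ℚ_[p])) • ((δ ^ k) x) := by
      rw [hpow, ContinuousLinearMap.sum_apply]
      refine Finset.sum_congr rfl fun k _ => ?_
      simp only [one_pow, mul_one, ContinuousLinearMap.mul_apply,
        ContinuousLinearMap.natCast_apply, map_nsmul, Nat.cast_smul_eq_nsmul]
    rw [h2, Finset.sum_range_succ']
    simp only [Nat.choose_zero_right, Nat.cast_one, pow_zero,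
      ContinuousLinearMap.one_apply, one_smul]
    rw [add_sub_cancel_right, Finset.smul_sum]
    refine Finset.sum_congr rfl fun k _ => ?_
    rw [smul_smul, div_eq_inv_mul]
  -- the key quantitative bound
  have key : ∀ n : ℕ,
      ‖((p:ℚ_[p]) ^ n)⁻¹ • ((γ ^ (p ^ n)) x - x) - ∑' j, a j‖
        ≤ ((p:ℝ)⁻¹) ^ (n+1) * ‖x‖ := by
    intro n
    have hnp : n + 1 ≤ p ^ n + 1 := by
      have := Nat.lt_pow_self (n := n) hp.one_lt
      omega
    have hsplit := Summable.sum_add_tsum_nat_add (f := a) (p ^ n) ha_sum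
    rw [hexp n, ← hsplit]
    have hrw : (∑ k ∈ Finset.range (p ^ n),
          ((((p ^ n).choose (k+1) : ℚ_[p])) / (p:ℚ_[p]) ^ n) • ((δ ^ (k+1)) x))
        - ((∑ k ∈ Finset.range (p ^ n), a k) + ∑' k, a (k + p ^ n))
        = (∑ k ∈ Finset.range (p ^ n),
            (((((p ^ n).choose (k+1) : ℚ_[p])) / (p:ℚ_[p]) ^ n - c k) • ((δ ^ (k+1)) x)))
          - ∑' k, a (k + p ^ n) := by
      simp only [sub_smul]
      rw [Finset.sum_sub_distrib]
      abel
    rw [hrw]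
    have hU : ‖∑ k ∈ Finset.range (p ^ n),
        (((((p ^ n).choose (k+1) : ℚ_[p])) / (p:ℚ_[p]) ^ n - c k) • ((δ ^ (k+1)) x))‖
        ≤ ((p:ℝ)⁻¹) ^ (n+1) * ‖x‖ := by
      apply IsUltrametricDist.norm_sum_le_of_forall_le_of_nonneg (by positivity)
      intro k hk
      have hklt : k < p ^ n := Finset.mem_range.mp hk
      rw [norm_smul]
      calc ‖(((p ^ n).choose (k+1) : ℚ_[p])) / (p:ℚ_[p]) ^ n - c k‖ * ‖(δ ^ (k+1)) x‖
          ≤ ((p:ℝ) ^ (k+1) * ((p:ℝ) ^ n)⁻¹) * ((((p:ℝ)^2)⁻¹)^(k+1) * ‖x‖) :=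
            mul_le_mul (aux_coeff p n k hklt) (hδpow (k+1) x) (norm_nonneg _) (by positivity)
        _ = ((p:ℝ) ^ n)⁻¹ * (((p:ℝ)⁻¹) ^ (k+1) * ‖x‖) := by
            rw [← hmulpow k]; ring
        _ ≤ ((p:ℝ) ^ n)⁻¹ * (((p:ℝ)⁻¹) ^ 1 * ‖x‖) := by
            apply mul_le_mul_of_nonneg_left _ (by positivity)
            apply mul_le_mul_of_nonneg_right _ (norm_nonneg _)
            exact pow_le_pow_of_le_one hpinv0 hpinv1.le (by omega)
        _ = ((p:ℝ)⁻¹) ^ (n+1) * ‖x‖ := by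
            rw [pow_succ, ← inv_pow]; ring
    have hT : ‖∑' k, a (k + p ^ n)‖ ≤ ((p:ℝ)⁻¹) ^ (n+1) * ‖x‖ := by
      apply IsUltrametricDist.norm_tsum_le_of_forall_le_of_nonneg (by positivity)
      intro k
      calc ‖a (k + p ^ n)‖ ≤ ((p:ℝ)⁻¹) ^ (k + p ^ n + 1) * ‖x‖ := ha_norm _
        _ ≤ ((p:ℝ)⁻¹) ^ (n+1) * ‖x‖ := by
            apply mul_le_mul_of_nonneg_right _ (norm_nonneg _)
            exact pow_le_pow_of_le_one hpinv0 hpinv1.le (by omega)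
    calc ‖_ - _‖ ≤ max ‖∑ k ∈ Finset.range (p ^ n),
            (((((p ^ n).choose (k+1) : ℚ_[p])) / (p:ℚ_[p]) ^ n - c k) • ((δ ^ (k+1)) x))‖
          ‖∑' k, a (k + p ^ n)‖ := by
          rw [sub_eq_add_neg]
          exact (IsUltrametricDist.norm_add_le_max _ _).trans (by rw [norm_neg])
      _ ≤ ((p:ℝ)⁻¹) ^ (n+1) * ‖x‖ := max_le hU hT
  -- conclude
  rw [htsum]
  rw [← tendsto_sub_nhds_zero_iff]
  apply squeeze_zero_norm key
  have h0 : Tendsto (fun n : ℕ => ((p:ℝ)⁻¹) ^ n) atTop (nhds 0) :=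
    tendsto_pow_atTop_nhds_zero_of_lt_one hpinv0 hpinv1
  have h1 := (h0.comp (tendsto_add_atTop_nat 1)).mul_const ‖x‖
  simpa [Function.comp] using h1
end
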